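/- arXiv:2503.03253 — 2 statements merged into one kernel-verified Lean document; each statement's English description precedes it below -/
import Mathlib

section
/- Let U ⊂ ℝ^l be compact and M > 0. Suppose b : [0,T] × ℝ × 𝒫₂(ℝ×U) × U → ℝ is uniformly Lipschitz in (x,ρ): for all t ∈ [0,T], u ∈ U, x, x' ∈ ℝ and ρ, ρ' ∈ 𝒫₂(ℝ×U), |b(t,x,ρ,u) − b(t,x',ρ',u)| ≤ M(|x − x'| + W_{2,ℝ×U}(ρ,ρ')). Define the extension b̃(t,x,ξ,u) := b(t,x,𝒫(ξ),u) for ξ ∈ 𝒫₂(ℝ×𝒫(U)). Then for all t ∈ [0,T], u ∈ U, x, x' ∈ ℝ and ξ, ξ' ∈ 𝒫₂(ℝ×𝒫(U)), |b̃(t,x,ξ,u) − b̃(t,x',ξ',u)| ≤ M(|x − x'| + W_{2,ℝ×𝒫(U)}(ξ,ξ')). -/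
open Set MeasureTheory

/-- The squared 2-Wasserstein "distance" between two measures on `E`, relative to an
explicit squared-cost function `c`: the infimum over all couplings `π` of `μ` and `ν`
of `∫ c(x, y) dπ`. -/
noncomputable def W2sq {E : Type*} [MeasurableSpace E] (c : E → E → ℝ)
    (μ ν : Measure E) : ℝ :=
  sInf {r : ℝ | ∃ π : Measure (E × E),
    π.map Prod.fst = μ ∧ π.map Prod.snd = ν ∧ r = ∫ p, c p.1 p.2 ∂π}

/-- 2-Wasserstein distance relative to a squared cost `c`. -/
noncomputable def W2 {E : Type*} [MeasurableSpace E] (c : E → E → ℝ)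
    (μ ν : Measure E) : ℝ :=
  Real.sqrt (W2sq c μ ν)

/-- The map `𝒫 : 𝒫₂(ℝ × 𝒫(U)) → 𝒫₂(ℝ × U)`,
`𝒫(ξ)(B) = ∫_{ℝ×𝒫(U)} (δ_x ⊗ q)(B) ξ(dx, dq)`. -/
noncomputable def Pext {l : ℕ} (U : Set (EuclideanSpace ℝ (Fin l)))
    (ξ : Measure (ℝ × Measure U)) : Measure (ℝ × U) :=
  ξ.bind (fun p => (Measure.dirac p.1).prod p.2)

open ENNReal

noncomputable section
namespace Stmt8Aux


/-! ### Generic measurability lemma for products of measure-valued maps -/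

variable {α β Z : Type*} [MeasurableSpace α] [MeasurableSpace β] [MeasurableSpace Z]

lemma measurable_prod_apply (μ : Z → Measure α) (ν : Z → Measure β)
    (hμ : ∀ s : Set α, MeasurableSet s → Measurable fun z => μ z s)
    (hν : ∀ s : Set β, MeasurableSet s → Measurable fun z => ν z s)
    (hμ1 : ∀ z, μ z Set.univ ≤ 1) (hν1 : ∀ z, ν z Set.univ ≤ 1)
    {s : Set (α × β)} (hs : MeasurableSet s) :
    Measurable (fun z => ((μ z).prod (ν z)) s) := by
  have hμf : ∀ z, IsFiniteMeasure (μ z) := fun z =>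
    ⟨lt_of_le_of_lt (hμ1 z) ENNReal.one_lt_top⟩
  have hνf : ∀ z, IsFiniteMeasure (ν z) := fun z =>
    ⟨lt_of_le_of_lt (hν1 z) ENNReal.one_lt_top⟩
  have hprodfin : ∀ z, ((μ z).prod (ν z)) Set.univ ≤ 1 := by
    intro z
    haveI := hμf z; haveI := hνf z
    rw [← Set.univ_prod_univ, Measure.prod_prod]
    exact mul_le_one' (hμ1 z) (hν1 z)
  refine MeasurableSpace.induction_on_inter (C := fun s _ => Measurable fun z => ((μ z).prod (ν z)) s)
    generateFrom_prod.symm isPiSystem_prod ?_ ?_ ?_ ?_ _ hs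
  · simp
  · rintro t ht
    obtain ⟨A, hA, B, hB, rfl⟩ := ht
    have : ∀ z, ((μ z).prod (ν z)) (A ×ˢ B) = μ z A * ν z B := by
      intro z; haveI := hμf z; haveI := hνf z; exact Measure.prod_prod A B
    simp_rw [this]
    exact (hμ A hA).mul (hν B hB)
  · rintro t ht hC
    have : ∀ z, ((μ z).prod (ν z)) tᶜ = ((μ z).prod (ν z)) Set.univ - ((μ z).prod (ν z)) t := by
      intro z; haveI := hμf z; haveI := hνf z
      exact measure_compl ht (measure_ne_top _ t)
    simp_rw [this]
    have huniv : Measurable (fun z => ((μ z).prod (ν z)) Set.univ) := by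
      have : ∀ z, ((μ z).prod (ν z)) Set.univ = μ z Set.univ * ν z Set.univ := by
        intro z; haveI := hμf z; haveI := hνf z
        rw [← Set.univ_prod_univ, Measure.prod_prod]
      simp_rw [this]
      exact (hμ _ MeasurableSet.univ).mul (hν _ MeasurableSet.univ)
    exact huniv.sub hC
  · rintro f hdisj hfm hC
    have : ∀ z, ((μ z).prod (ν z)) (⋃ i, f i) = ∑' i, ((μ z).prod (ν z)) (f i) := by
      intro z; exact measure_iUnion hdisj hfm
    simp_rw [this]
    exact Measurable.ennreal_tsum hC

/-! ### Partition machinery on a compact set -/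

variable {l : ℕ} {U : Set (EuclideanSpace ℝ (Fin l))}

def del (n : ℕ) : ℝ := 1 / (n + 1)

lemma del_pos (n : ℕ) : 0 < del n := by
  have : (0:ℝ) < (n:ℝ) + 1 := by positivity
  exact div_pos one_pos this

def piece (z : ℕ → U) (n i : ℕ) : Set U :=
  Metric.ball (z i) (del n) \ ⋃ j ∈ Finset.range i, Metric.ball (z j) (del n)

lemma measurableSet_piece (z : ℕ → U) (n i : ℕ) : MeasurableSet (piece z n i) :=
  measurableSet_ball.diff
    (MeasurableSet.biUnion (Finset.range i).countable_toSet (fun _ _ => measurableSet_ball))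

lemma piece_subset (z : ℕ → U) (n i : ℕ) : piece z n i ⊆ Metric.ball (z i) (del n) :=
  Set.diff_subset

lemma piece_disjoint (z : ℕ → U) (n : ℕ) {i j : ℕ} (hij : i ≠ j) :
    Disjoint (piece z n i) (piece z n j) := by
  wlog h : i < j generalizing i j
  · exact (this hij.symm (by omega)).symm
  rw [Set.disjoint_left]
  intro x hxi hxj
  exact hxj.2 (Set.mem_biUnion (Finset.mem_coe.mpr (Finset.mem_range.mpr h)) hxi.1)

lemma piece_biUnion (z : ℕ → U) {n Nn : ℕ}
    (hcov : Set.univ ⊆ ⋃ i ∈ Finset.range Nn, Metric.ball (z i) (del n)) :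
    ⋃ i ∈ Finset.range Nn, piece z n i = Set.univ := by
  apply Set.eq_univ_of_univ_subset
  intro x _
  have hx : ∃ i, i < Nn ∧ x ∈ Metric.ball (z i) (del n) := by
    have := hcov (Set.mem_univ x); simpa using this
  classical
  let k := Nat.find hx
  have hk := Nat.find_spec hx
  refine Set.mem_biUnion (Finset.mem_coe.mpr (Finset.mem_range.mpr hk.1)) ?_
  refine ⟨hk.2, ?_⟩
  intro hmem
  simp only [Finset.mem_range, Set.mem_iUnion] at hmem
  obtain ⟨j, hj, hball⟩ := hmem
  exact Nat.find_min hx hj ⟨lt_trans hj hk.1, hball⟩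

lemma sum_measure_pieces (z : ℕ → U) {n Nn : ℕ}
    (hcov : Set.univ ⊆ ⋃ i ∈ Finset.range Nn, Metric.ball (z i) (del n))
    (q : Measure U) {T : Set U} (hT : MeasurableSet T) :
    ∑ i ∈ Finset.range Nn, q (T ∩ piece z n i) = q T := by
  classical
  rw [← measure_biUnion_finset]
  · congr 1
    rw [← Set.inter_iUnion₂, piece_biUnion z hcov, Set.inter_univ]
  · intro i _ j _ hij
    exact Disjoint.mono Set.inter_subset_right Set.inter_subset_right
      (piece_disjoint z n hij)
  · exact fun i _ => hT.inter (measurableSet_piece z n i)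


/-! ### Candidates and explicit couplings -/

abbrev Cand : Type := ℕ × ((ℕ × ℕ) →₀ ℚ)

variable (z : ℕ → U) (N : ℕ → ℕ) (D : ℝ)

def cc (c : Cand) (i j : ℕ) : ℝ≥0∞ := ENNReal.ofReal ((c.2 (i, j) : ℚ) : ℝ)

lemma cc_ne_top (c : Cand) (i j : ℕ) : cc c i j ≠ ⊤ := ENNReal.ofReal_ne_top

def rowS (c : Cand) (i : ℕ) : ℝ≥0∞ := ∑ j ∈ Finset.range (N c.1), cc c i j
def colS (c : Cand) (j : ℕ) : ℝ≥0∞ := ∑ i ∈ Finset.range (N c.1), cc c i j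
def Stot (c : Cand) : ℝ≥0∞ := ∑ i ∈ Finset.range (N c.1), rowS N c i

lemma Stot_eq_col (c : Cand) : ∑ j ∈ Finset.range (N c.1), colS N c j = Stot N c :=
  Finset.sum_comm

def Adm (c : Cand) (q q' : Measure U) : Prop :=
  (∀ i ∈ Finset.range (N c.1), rowS N c i ≤ q (piece z c.1 i)) ∧
  (∀ j ∈ Finset.range (N c.1), colS N c j ≤ q' (piece z c.1 j))

def Vval (c : Cand) : ℝ≥0∞ :=
  (∑ i ∈ Finset.range (N c.1), ∑ j ∈ Finset.range (N c.1),
    cc c i j * ENNReal.ofReal ((dist (z i : U) (z j : U) + 2 * del c.1) ^ 2))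
  + (1 - Stot N c) * ENNReal.ofReal (D ^ 2)

lemma Vval_ne_top (c : Cand) : Vval z N D c ≠ ⊤ := by
  apply ENNReal.add_ne_top.2
  constructor
  · apply ne_of_lt
    apply ENNReal.sum_lt_top.mpr
    intro i _
    apply ENNReal.sum_lt_top.mpr
    intro j _
    exact ENNReal.mul_lt_top ENNReal.ofReal_lt_top ENNReal.ofReal_lt_top
  · exact ne_of_lt (ENNReal.mul_lt_top
      (lt_of_le_of_lt tsub_le_self ENNReal.one_lt_top) ENNReal.ofReal_lt_top)

open Classical in
def gfun (c : Cand) (qq : Measure U × Measure U) : ℝ≥0∞ :=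
  if Adm z N c qq.1 qq.2 ∧ qq.1 Set.univ = 1 ∧ qq.2 Set.univ = 1 then Vval z N D c else ⊤

def Gfun (qq : Measure U × Measure U) : ℝ≥0∞ := ⨅ c : Cand, gfun z N D c qq

/-! ### small ENNReal helpers -/

lemma enn_mul_inv_self_le_one (a : ℝ≥0∞) : a * a⁻¹ ≤ 1 := by
  rcases eq_or_ne a 0 with h | h
  · simp [h]
  · rcases eq_or_ne a ⊤ with h' | h'
    · simp [h']
    · exact le_of_eq (ENNReal.mul_inv_cancel h h')

lemma enn_inv_mul_self_le_one (a : ℝ≥0∞) : a⁻¹ * a ≤ 1 := by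
  rw [mul_comm]; exact enn_mul_inv_self_le_one a

lemma enn_cancel {c b : ℝ≥0∞} (hb : b ≠ ⊤) (h0 : b = 0 → c = 0) (y : ℝ≥0∞) :
    c * y * (b⁻¹ * b) = c * y := by
  rcases eq_or_ne b 0 with h | h
  · simp [h, h0 h]
  · rw [ENNReal.inv_mul_cancel h hb, mul_one]

lemma enn_cancel' {x a : ℝ≥0∞} (hx : x ≤ a) (ha : a ≠ ⊤) : x * a⁻¹ * a = x := by
  rcases eq_or_ne a 0 with h | h
  · have : x = 0 := le_antisymm (h ▸ hx) (zero_le)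
    simp [this]
  · rw [mul_assoc, ENNReal.inv_mul_cancel h ha, mul_one]

lemma enn_aux1 {s a x : ℝ≥0∞} (hs : s ≤ a) (ha : a ≠ ⊤) (hx : x ≤ a) :
    s * (a⁻¹ * x) + (a - s) * a⁻¹ * x = x := by
  rcases eq_or_ne a 0 with h | h
  · have hs0 : s = 0 := le_antisymm (h ▸ hs) (zero_le)
    have hx0 : x = 0 := le_antisymm (h ▸ hx) (zero_le)
    simp [hs0, hx0]
  · have : s * (a⁻¹ * x) + (a - s) * a⁻¹ * x = (s + (a - s)) * (a⁻¹ * x) := by ring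
    rw [this, add_tsub_cancel_of_le hs, ← mul_assoc, ENNReal.mul_inv_cancel h ha, one_mul]

lemma finset_sum_measure_apply {ι : Type*} (I : Finset ι) (μ : ι → Measure α) (s : Set α) :
    (∑ i ∈ I, μ i) s = ∑ i ∈ I, μ i s := by
  rw [Measure.coe_finset_sum]
  exact Finset.sum_apply s I _

/-! ### The explicit coupling -/

def lov (c : Cand) (q : Measure U) : Measure U :=
  ∑ i ∈ Finset.range (N c.1),
    ((q (piece z c.1 i) - rowS N c i) * (q (piece z c.1 i))⁻¹) • q.restrict (piece z c.1 i)

def lov' (c : Cand) (q' : Measure U) : Measure U :=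
  ∑ j ∈ Finset.range (N c.1),
    ((q' (piece z c.1 j) - colS N c j) * (q' (piece z c.1 j))⁻¹) • q'.restrict (piece z c.1 j)

def gam (c : Cand) (q q' : Measure U) : Measure (U × U) :=
  (∑ i ∈ Finset.range (N c.1), ∑ j ∈ Finset.range (N c.1),
    (cc c i j * (q (piece z c.1 i))⁻¹ * (q' (piece z c.1 j))⁻¹) •
      ((q.restrict (piece z c.1 i)).prod (q'.restrict (piece z c.1 j))))
  + (1 - Stot N c)⁻¹ • ((lov z N c q).prod (lov' z N c q'))

lemma lov_apply (c : Cand) (q : Measure U) {T : Set U} (hT : MeasurableSet T) :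
    lov z N c q T = ∑ i ∈ Finset.range (N c.1),
      (q (piece z c.1 i) - rowS N c i) * (q (piece z c.1 i))⁻¹ * q (T ∩ piece z c.1 i) := by
  rw [lov, finset_sum_measure_apply]
  refine Finset.sum_congr rfl fun i _ => ?_
  rw [Measure.smul_apply, Measure.restrict_apply hT, smul_eq_mul]

lemma lov'_apply (c : Cand) (q' : Measure U) {T : Set U} (hT : MeasurableSet T) :
    lov' z N c q' T = ∑ j ∈ Finset.range (N c.1),
      (q' (piece z c.1 j) - colS N c j) * (q' (piece z c.1 j))⁻¹ * q' (T ∩ piece z c.1 j) := by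
  rw [lov', finset_sum_measure_apply]
  refine Finset.sum_congr rfl fun j _ => ?_
  rw [Measure.smul_apply, Measure.restrict_apply hT, smul_eq_mul]

lemma lov_mass_le (c : Cand) (q : Measure U) [IsProbabilityMeasure q] :
    lov z N c q Set.univ ≤ 1 := by
  rw [lov_apply z N c q MeasurableSet.univ]
  calc ∑ i ∈ Finset.range (N c.1), (q (piece z c.1 i) - rowS N c i) *
        (q (piece z c.1 i))⁻¹ * q (Set.univ ∩ piece z c.1 i)
      ≤ ∑ i ∈ Finset.range (N c.1), q (Set.univ ∩ piece z c.1 i) := by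
        refine Finset.sum_le_sum fun i _ => ?_
        have h1 : (q (piece z c.1 i) - rowS N c i) * (q (piece z c.1 i))⁻¹ ≤ 1 :=
          le_trans (mul_le_mul_left tsub_le_self _) (enn_mul_inv_self_le_one _)
        calc (q (piece z c.1 i) - rowS N c i) * (q (piece z c.1 i))⁻¹ *
              q (Set.univ ∩ piece z c.1 i)
            ≤ 1 * q (Set.univ ∩ piece z c.1 i) := mul_le_mul_left h1 _
          _ = q (Set.univ ∩ piece z c.1 i) := one_mul _
    _ = q (⋃ i ∈ Finset.range (N c.1), piece z c.1 i) := by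
        simp only [Set.univ_inter]
        exact (measure_biUnion_finset
          (fun i _ j _ hij => piece_disjoint z c.1 hij)
          (fun i _ => measurableSet_piece z c.1 i)).symm
    _ ≤ 1 := prob_le_one

lemma lov'_mass_le (c : Cand) (q' : Measure U) [IsProbabilityMeasure q'] :
    lov' z N c q' Set.univ ≤ 1 := by
  rw [lov'_apply z N c q' MeasurableSet.univ]
  calc ∑ j ∈ Finset.range (N c.1), (q' (piece z c.1 j) - colS N c j) *
        (q' (piece z c.1 j))⁻¹ * q' (Set.univ ∩ piece z c.1 j)
      ≤ ∑ j ∈ Finset.range (N c.1), q' (Set.univ ∩ piece z c.1 j) := by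
        refine Finset.sum_le_sum fun j _ => ?_
        have h1 : (q' (piece z c.1 j) - colS N c j) * (q' (piece z c.1 j))⁻¹ ≤ 1 :=
          le_trans (mul_le_mul_left tsub_le_self _) (enn_mul_inv_self_le_one _)
        calc (q' (piece z c.1 j) - colS N c j) * (q' (piece z c.1 j))⁻¹ *
              q' (Set.univ ∩ piece z c.1 j)
            ≤ 1 * q' (Set.univ ∩ piece z c.1 j) := mul_le_mul_left h1 _
          _ = q' (Set.univ ∩ piece z c.1 j) := one_mul _
    _ = q' (⋃ i ∈ Finset.range (N c.1), piece z c.1 i) := by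
        simp only [Set.univ_inter]
        exact (measure_biUnion_finset
          (fun i _ j _ hij => piece_disjoint z c.1 hij)
          (fun i _ => measurableSet_piece z c.1 i)).symm
    _ ≤ 1 := prob_le_one

instance lov_finite (c : Cand) (q : Measure U) [IsProbabilityMeasure q] :
    IsFiniteMeasure (lov z N c q) :=
  ⟨lt_of_le_of_lt (lov_mass_le z N c q) ENNReal.one_lt_top⟩

instance lov'_finite (c : Cand) (q' : Measure U) [IsProbabilityMeasure q'] :
    IsFiniteMeasure (lov' z N c q') :=
  ⟨lt_of_le_of_lt (lov'_mass_le z N c q') ENNReal.one_lt_top⟩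

lemma gam_apply_prod (c : Cand) (q q' : Measure U)
    [IsProbabilityMeasure q] [IsProbabilityMeasure q']
    {T S : Set U} (hT : MeasurableSet T) (hS : MeasurableSet S) :
    gam z N c q q' (T ×ˢ S) =
      (∑ i ∈ Finset.range (N c.1), ∑ j ∈ Finset.range (N c.1),
        (cc c i j * (q (piece z c.1 i))⁻¹ * (q' (piece z c.1 j))⁻¹) *
          (q (T ∩ piece z c.1 i) * q' (S ∩ piece z c.1 j)))
      + (1 - Stot N c)⁻¹ * (lov z N c q T * lov' z N c q' S) := by
  rw [gam, Measure.add_apply, finset_sum_measure_apply]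
  congr 1
  · refine Finset.sum_congr rfl fun i _ => ?_
    rw [finset_sum_measure_apply]
    refine Finset.sum_congr rfl fun j _ => ?_
    rw [Measure.smul_apply, smul_eq_mul, Measure.prod_prod,
      Measure.restrict_apply hT, Measure.restrict_apply hS]
  · rw [Measure.smul_apply, smul_eq_mul, Measure.prod_prod]

lemma enn_sum_tsub {ι : Type*} (I : Finset ι) (f g : ι → ℝ≥0∞)
    (h : ∀ i ∈ I, g i ≤ f i) (hf : ∑ i ∈ I, f i ≠ ⊤) :
    ∑ i ∈ I, (f i - g i) = ∑ i ∈ I, f i - ∑ i ∈ I, g i := by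
  have h1 : ∑ i ∈ I, (f i - g i) + ∑ i ∈ I, g i = ∑ i ∈ I, f i := by
    rw [← Finset.sum_add_distrib]
    exact Finset.sum_congr rfl fun i hi => tsub_add_cancel_of_le (h i hi)
  exact ENNReal.eq_sub_of_add_eq (ne_top_of_le_ne_top hf
    (Finset.sum_le_sum fun i hi => h i hi)) h1

lemma sum_piece_mass (q : Measure U) [IsProbabilityMeasure q] {n Nn : ℕ}
    (hcov : Set.univ ⊆ ⋃ i ∈ Finset.range Nn, Metric.ball (z i) (del n)) :
    ∑ i ∈ Finset.range Nn, q (piece z n i) = 1 := by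
  have := sum_measure_pieces z hcov q MeasurableSet.univ
  simpa [Set.univ_inter] using this

lemma one_sub_Stot_ne_top (c : Cand) : (1 - Stot N c) ≠ ⊤ :=
  ne_of_lt (lt_of_le_of_lt tsub_le_self ENNReal.one_lt_top)

lemma lov_mass (c : Cand) (q : Measure U) [IsProbabilityMeasure q]
    (hadm : ∀ i ∈ Finset.range (N c.1), rowS N c i ≤ q (piece z c.1 i))
    (hcov : Set.univ ⊆ ⋃ i ∈ Finset.range (N c.1), Metric.ball (z i) (del c.1)) :
    lov z N c q Set.univ = 1 - Stot N c := by
  rw [lov_apply z N c q MeasurableSet.univ]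
  simp only [Set.univ_inter]
  have h1 : ∀ i ∈ Finset.range (N c.1),
      (q (piece z c.1 i) - rowS N c i) * (q (piece z c.1 i))⁻¹ * q (piece z c.1 i)
        = q (piece z c.1 i) - rowS N c i :=
    fun i _ => enn_cancel' tsub_le_self (measure_ne_top q _)
  have hmass := sum_piece_mass z q hcov
  rw [Finset.sum_congr rfl h1, enn_sum_tsub _ _ _ hadm (by rw [hmass]; exact one_ne_top), hmass]
  rfl

lemma lov'_mass (c : Cand) (q' : Measure U) [IsProbabilityMeasure q']
    (hadm : ∀ j ∈ Finset.range (N c.1), colS N c j ≤ q' (piece z c.1 j))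
    (hcov : Set.univ ⊆ ⋃ i ∈ Finset.range (N c.1), Metric.ball (z i) (del c.1)) :
    lov' z N c q' Set.univ = 1 - Stot N c := by
  rw [lov'_apply z N c q' MeasurableSet.univ]
  simp only [Set.univ_inter]
  have h1 : ∀ j ∈ Finset.range (N c.1),
      (q' (piece z c.1 j) - colS N c j) * (q' (piece z c.1 j))⁻¹ * q' (piece z c.1 j)
        = q' (piece z c.1 j) - colS N c j :=
    fun j _ => enn_cancel' tsub_le_self (measure_ne_top q' _)
  have hmass := sum_piece_mass z q' hcov
  rw [Finset.sum_congr rfl h1, enn_sum_tsub _ _ _ hadm (by rw [hmass]; exact one_ne_top), hmass,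
    Stot_eq_col]

lemma gam_fst (c : Cand) (q q' : Measure U)
    [IsProbabilityMeasure q] [IsProbabilityMeasure q'] (hadm : Adm z N c q q')
    (hcov : Set.univ ⊆ ⋃ i ∈ Finset.range (N c.1), Metric.ball (z i) (del c.1))
    {T : Set U} (hT : MeasurableSet T) :
    gam z N c q q' (T ×ˢ Set.univ) = q T := by
  rw [gam_apply_prod z N c q q' hT MeasurableSet.univ]
  have hb0 : ∀ i j, i ∈ Finset.range (N c.1) → j ∈ Finset.range (N c.1) →
      (q' (piece z c.1 j) = 0 → cc c i j = 0) := by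
    intro i j hi hj h
    have h1 : cc c i j ≤ colS N c j :=
      Finset.single_le_sum (f := fun i => cc c i j) (fun _ _ => zero_le) hi
    have h2 := le_trans h1 (hadm.2 j hj)
    rw [h] at h2
    exact le_antisymm h2 (zero_le)
  have hsum : ∀ i ∈ Finset.range (N c.1),
      ∑ j ∈ Finset.range (N c.1),
        (cc c i j * (q (piece z c.1 i))⁻¹ * (q' (piece z c.1 j))⁻¹) *
          (q (T ∩ piece z c.1 i) * q' (Set.univ ∩ piece z c.1 j))
      = rowS N c i * ((q (piece z c.1 i))⁻¹ * q (T ∩ piece z c.1 i)) := by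
    intro i hi
    rw [rowS, Finset.sum_mul]
    refine Finset.sum_congr rfl fun j hj => ?_
    simp only [Set.univ_inter]
    have hre : (cc c i j * (q (piece z c.1 i))⁻¹ * (q' (piece z c.1 j))⁻¹) *
          (q (T ∩ piece z c.1 i) * q' (piece z c.1 j))
        = cc c i j * ((q (piece z c.1 i))⁻¹ * q (T ∩ piece z c.1 i)) *
          ((q' (piece z c.1 j))⁻¹ * q' (piece z c.1 j)) := by ring
    rw [hre, enn_cancel (measure_ne_top q' _) (hb0 i j hi hj)]
  rw [Finset.sum_congr rfl hsum]
  rw [lov'_mass z N c q' hadm.2 hcov]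
  have hm : (1 - Stot N c)⁻¹ * (lov z N c q T * (1 - Stot N c)) = lov z N c q T := by
    rcases eq_or_ne (1 - Stot N c) 0 with h | h
    · have hle : lov z N c q T ≤ lov z N c q Set.univ := measure_mono (Set.subset_univ _)
      rw [lov_mass z N c q hadm.1 hcov, h] at hle
      have h0 : lov z N c q T = 0 := le_antisymm hle (zero_le)
      simp [h, h0]
    · have hre : (1 - Stot N c)⁻¹ * (lov z N c q T * (1 - Stot N c))
          = lov z N c q T * ((1 - Stot N c)⁻¹ * (1 - Stot N c)) := by ring
      rw [hre, ENNReal.inv_mul_cancel h (one_sub_Stot_ne_top N c), mul_one]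
  rw [hm, lov_apply z N c q hT, ← Finset.sum_add_distrib]
  have hterm : ∀ i ∈ Finset.range (N c.1),
      rowS N c i * ((q (piece z c.1 i))⁻¹ * q (T ∩ piece z c.1 i)) +
        (q (piece z c.1 i) - rowS N c i) * (q (piece z c.1 i))⁻¹ * q (T ∩ piece z c.1 i)
      = q (T ∩ piece z c.1 i) :=
    fun i hi => enn_aux1 (hadm.1 i hi) (measure_ne_top q _)
      (measure_mono Set.inter_subset_right)
  rw [Finset.sum_congr rfl hterm]
  exact sum_measure_pieces z hcov q hT

lemma gam_snd (c : Cand) (q q' : Measure U)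
    [IsProbabilityMeasure q] [IsProbabilityMeasure q'] (hadm : Adm z N c q q')
    (hcov : Set.univ ⊆ ⋃ i ∈ Finset.range (N c.1), Metric.ball (z i) (del c.1))
    {T : Set U} (hT : MeasurableSet T) :
    gam z N c q q' (Set.univ ×ˢ T) = q' T := by
  rw [gam_apply_prod z N c q q' MeasurableSet.univ hT]
  have ha0 : ∀ i j, i ∈ Finset.range (N c.1) → j ∈ Finset.range (N c.1) →
      (q (piece z c.1 i) = 0 → cc c i j = 0) := by
    intro i j hi hj h
    have h1 : cc c i j ≤ rowS N c i :=
      Finset.single_le_sum (f := fun j => cc c i j) (fun _ _ => zero_le) hj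
    have h2 := le_trans h1 (hadm.1 i hi)
    rw [h] at h2
    exact le_antisymm h2 (zero_le)
  rw [Finset.sum_comm]
  have hsum : ∀ j ∈ Finset.range (N c.1),
      ∑ i ∈ Finset.range (N c.1),
        (cc c i j * (q (piece z c.1 i))⁻¹ * (q' (piece z c.1 j))⁻¹) *
          (q (Set.univ ∩ piece z c.1 i) * q' (T ∩ piece z c.1 j))
      = colS N c j * ((q' (piece z c.1 j))⁻¹ * q' (T ∩ piece z c.1 j)) := by
    intro j hj
    rw [colS, Finset.sum_mul]
    refine Finset.sum_congr rfl fun i hi => ?_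
    simp only [Set.univ_inter]
    have hre : (cc c i j * (q (piece z c.1 i))⁻¹ * (q' (piece z c.1 j))⁻¹) *
          (q (piece z c.1 i) * q' (T ∩ piece z c.1 j))
        = cc c i j * ((q' (piece z c.1 j))⁻¹ * q' (T ∩ piece z c.1 j)) *
          ((q (piece z c.1 i))⁻¹ * q (piece z c.1 i)) := by ring
    rw [hre, enn_cancel (measure_ne_top q _) (ha0 i j hi hj)]
  rw [Finset.sum_congr rfl hsum]
  rw [lov_mass z N c q hadm.1 hcov]
  have hm : (1 - Stot N c)⁻¹ * ((1 - Stot N c) * lov' z N c q' T) = lov' z N c q' T := by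
    rcases eq_or_ne (1 - Stot N c) 0 with h | h
    · have hle : lov' z N c q' T ≤ lov' z N c q' Set.univ := measure_mono (Set.subset_univ _)
      rw [lov'_mass z N c q' hadm.2 hcov, h] at hle
      have h0 : lov' z N c q' T = 0 := le_antisymm hle (zero_le)
      simp [h, h0]
    · have hre : (1 - Stot N c)⁻¹ * ((1 - Stot N c) * lov' z N c q' T)
          = lov' z N c q' T * ((1 - Stot N c)⁻¹ * (1 - Stot N c)) := by ring
      rw [hre, ENNReal.inv_mul_cancel h (one_sub_Stot_ne_top N c), mul_one]
  rw [hm, lov'_apply z N c q' hT, ← Finset.sum_add_distrib]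
  have hterm : ∀ j ∈ Finset.range (N c.1),
      colS N c j * ((q' (piece z c.1 j))⁻¹ * q' (T ∩ piece z c.1 j)) +
        (q' (piece z c.1 j) - colS N c j) * (q' (piece z c.1 j))⁻¹ * q' (T ∩ piece z c.1 j)
      = q' (T ∩ piece z c.1 j) :=
    fun j hj => enn_aux1 (hadm.2 j hj) (measure_ne_top q' _)
      (measure_mono Set.inter_subset_right)
  rw [Finset.sum_congr rfl hterm]
  exact sum_measure_pieces z hcov q' hT

lemma gam_mass (c : Cand) (q q' : Measure U)
    [IsProbabilityMeasure q] [IsProbabilityMeasure q'] (hadm : Adm z N c q q')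
    (hcov : Set.univ ⊆ ⋃ i ∈ Finset.range (N c.1), Metric.ball (z i) (del c.1)) :
    gam z N c q q' Set.univ = 1 := by
  rw [← Set.univ_prod_univ, gam_fst z N c q q' hadm hcov MeasurableSet.univ, measure_univ]

lemma gam_cost (c : Cand) (q q' : Measure U)
    [IsProbabilityMeasure q] [IsProbabilityMeasure q'] (hadm : Adm z N c q q')
    (hcov : Set.univ ⊆ ⋃ i ∈ Finset.range (N c.1), Metric.ball (z i) (del c.1))
    (hDd : ∀ u v : U, dist u v ≤ D) :
    ∫⁻ x, ENNReal.ofReal (dist x.1 x.2 ^ 2) ∂(gam z N c q q') ≤ Vval z N D c := by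
  set f : U × U → ℝ≥0∞ := fun x => ENNReal.ofReal (dist x.1 x.2 ^ 2) with hf
  rw [gam, lintegral_add_measure, lintegral_finset_sum_measure]
  refine add_le_add ?_ ?_
  · refine Finset.sum_le_sum fun i hi => ?_
    rw [lintegral_finset_sum_measure]
    refine Finset.sum_le_sum fun j hj => ?_
    rw [lintegral_smul_measure]
    set Ci := piece z c.1 i
    set Cj := piece z c.1 j
    have hpart : ∫⁻ x, f x ∂((q.restrict Ci).prod (q'.restrict Cj))
        ≤ ENNReal.ofReal ((dist (z i : U) (z j : U) + 2 * del c.1) ^ 2) *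
          (q Ci * q' Cj) := by
      rw [Measure.prod_restrict]
      have hmono : ∀ x ∈ Ci ×ˢ Cj, f x ≤
          ENNReal.ofReal ((dist (z i : U) (z j : U) + 2 * del c.1) ^ 2) := by
        rintro ⟨x1, x2⟩ ⟨hx1, hx2⟩
        have h1 : dist x1 (z i) < del c.1 := Metric.mem_ball.mp (piece_subset z c.1 i hx1)
        have h2 : dist x2 (z j) < del c.1 := Metric.mem_ball.mp (piece_subset z c.1 j hx2)
        have h3 : dist x1 x2 ≤ dist (z i : U) (z j : U) + 2 * del c.1 := by
          have h4 := dist_triangle4 x1 (z i) (z j) x2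
          have h5 : dist (z j : U) x2 = dist x2 (z j) := dist_comm _ _
          nlinarith [dist_nonneg (x := x1) (y := (z i : U))]
        exact ENNReal.ofReal_le_ofReal (by
          have := pow_le_pow_left₀ dist_nonneg h3 2
          simpa using this)
      calc ∫⁻ x in Ci ×ˢ Cj, f x ∂(q.prod q')
          ≤ ∫⁻ _x in Ci ×ˢ Cj,
            ENNReal.ofReal ((dist (z i : U) (z j : U) + 2 * del c.1) ^ 2) ∂(q.prod q') :=
            setLIntegral_mono' ((measurableSet_piece z c.1 i).prod
              (measurableSet_piece z c.1 j)) hmono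
        _ = ENNReal.ofReal ((dist (z i : U) (z j : U) + 2 * del c.1) ^ 2) *
            (q Ci * q' Cj) := by
            rw [setLIntegral_const, Measure.prod_prod]
    calc cc c i j * (q Ci)⁻¹ * (q' Cj)⁻¹ * ∫⁻ x, f x ∂((q.restrict Ci).prod (q'.restrict Cj))
        ≤ cc c i j * (q Ci)⁻¹ * (q' Cj)⁻¹ *
          (ENNReal.ofReal ((dist (z i : U) (z j : U) + 2 * del c.1) ^ 2) * (q Ci * q' Cj)) :=
          mul_le_mul_right hpart _
      _ = (cc c i j * ENNReal.ofReal ((dist (z i : U) (z j : U) + 2 * del c.1) ^ 2)) *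
          (((q Ci)⁻¹ * q Ci) * ((q' Cj)⁻¹ * q' Cj)) := by ring
      _ ≤ (cc c i j * ENNReal.ofReal ((dist (z i : U) (z j : U) + 2 * del c.1) ^ 2)) * 1 :=
          mul_le_mul_right (mul_le_one' (enn_inv_mul_self_le_one _) (enn_inv_mul_self_le_one _)) _
      _ = cc c i j * ENNReal.ofReal ((dist (z i : U) (z j : U) + 2 * del c.1) ^ 2) := mul_one _
  · rw [lintegral_smul_measure]
    have hbound : ∫⁻ x, f x ∂((lov z N c q).prod (lov' z N c q'))
        ≤ ENNReal.ofReal (D ^ 2) * ((1 - Stot N c) * (1 - Stot N c)) := by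
      calc ∫⁻ x, f x ∂((lov z N c q).prod (lov' z N c q'))
          ≤ ∫⁻ _x, ENNReal.ofReal (D ^ 2) ∂((lov z N c q).prod (lov' z N c q')) := by
            refine lintegral_mono fun x => ?_
            exact ENNReal.ofReal_le_ofReal (by
              have := pow_le_pow_left₀ dist_nonneg (hDd x.1 x.2) 2
              simpa using this)
        _ = ENNReal.ofReal (D ^ 2) * ((lov z N c q).prod (lov' z N c q')) Set.univ :=
            lintegral_const _
        _ = ENNReal.ofReal (D ^ 2) * ((1 - Stot N c) * (1 - Stot N c)) := by
            rw [← Set.univ_prod_univ, Measure.prod_prod,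
              lov_mass z N c q hadm.1 hcov, lov'_mass z N c q' hadm.2 hcov]
    calc (1 - Stot N c)⁻¹ * ∫⁻ x, f x ∂((lov z N c q).prod (lov' z N c q'))
        ≤ (1 - Stot N c)⁻¹ * (ENNReal.ofReal (D ^ 2) * ((1 - Stot N c) * (1 - Stot N c))) :=
          mul_le_mul_right hbound _
      _ = ((1 - Stot N c) * ENNReal.ofReal (D ^ 2)) * ((1 - Stot N c)⁻¹ * (1 - Stot N c)) := by
          ring
      _ ≤ ((1 - Stot N c) * ENNReal.ofReal (D ^ 2)) * 1 :=
          mul_le_mul_right (enn_inv_mul_self_le_one _) _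
      _ = (1 - Stot N c) * ENNReal.ofReal (D ^ 2) := mul_one _

/-! ### The inner bridge : `W2sq` on `U × U` versus `Gfun` -/

section Inner

variable (q q' : Measure U) [IsProbabilityMeasure q] [IsProbabilityMeasure q']

lemma measurable_distsq : Measurable (fun p : U × U => dist p.1 p.2 ^ 2) :=
  (measurable_fst.dist measurable_snd).pow_const 2

def innSet (q q' : Measure U) : Set ℝ :=
  {r : ℝ | ∃ π : Measure (U × U),
    π.map Prod.fst = q ∧ π.map Prod.snd = q' ∧
    r = ∫ p, (fun uu vv : U => dist uu vv ^ 2) p.1 p.2 ∂π}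

lemma W2sq_inner_eq : W2sq (fun uu vv : U => dist uu vv ^ 2) q q' = sInf (innSet q q') := rfl

lemma innSet_nonneg : ∀ r ∈ innSet q q', 0 ≤ r := by
  rintro r ⟨π, -, -, rfl⟩
  exact integral_nonneg fun p => sq_nonneg _

lemma innSet_bddBelow : BddBelow (innSet q q') :=
  ⟨0, fun r hr => innSet_nonneg q q' r hr⟩

lemma innSet_nonempty : (innSet q q').Nonempty := by
  refine ⟨_, q.prod q', ?_, ?_, rfl⟩
  · rw [Measure.map_fst_prod, measure_univ, one_smul]
  · rw [Measure.map_snd_prod, measure_univ, one_smul]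

lemma coupling_prob {π : Measure (U × U)} (h : π.map Prod.fst = q) :
    IsProbabilityMeasure π := by
  constructor
  have h1 : (π.map Prod.fst) Set.univ = q Set.univ := by rw [h]
  rw [Measure.map_apply measurable_fst MeasurableSet.univ, Set.preimage_univ] at h1
  rw [h1, measure_univ]

lemma coupling_value {π : Measure (U × U)} :
    ∫ p, dist p.1 p.2 ^ 2 ∂π = (∫⁻ p, ENNReal.ofReal (dist p.1 p.2 ^ 2) ∂π).toReal :=
  integral_eq_lintegral_of_nonneg_ae (ae_of_all _ fun p => sq_nonneg _)
    measurable_distsq.aestronglyMeasurable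

lemma coupling_lintegral_le {π : Measure (U × U)} [IsProbabilityMeasure π]
    (hDd : ∀ u v : U, dist u v ≤ D) :
    ∫⁻ p, ENNReal.ofReal (dist p.1 p.2 ^ 2) ∂π ≤ ENNReal.ofReal (D ^ 2) := by
  calc ∫⁻ p, ENNReal.ofReal (dist p.1 p.2 ^ 2) ∂π
      ≤ ∫⁻ _p, ENNReal.ofReal (D ^ 2) ∂π := by
        refine lintegral_mono fun p => ENNReal.ofReal_le_ofReal ?_
        have := pow_le_pow_left₀ dist_nonneg (hDd p.1 p.2) 2
        simpa using this
    _ = ENNReal.ofReal (D ^ 2) := by rw [lintegral_const, measure_univ, mul_one]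

lemma W2sq_le_toReal_gfun (hcovN : ∀ n, Set.univ ⊆ ⋃ i ∈ Finset.range (N n),
      Metric.ball (z i) (del n))
    (hDd : ∀ u v : U, dist u v ≤ D) (c : Cand)
    (hc : gfun z N D c (q, q') ≠ ⊤) :
    W2sq (fun uu vv : U => dist uu vv ^ 2) q q' ≤ (Vval z N D c).toReal := by
  have hadm : Adm z N c q q' := by
    by_contra h
    apply hc
    rw [gfun, if_neg (by tauto)]
  have hmem : (∫ p, dist p.1 p.2 ^ 2 ∂(gam z N c q q')) ∈ innSet q q' := by
    refine ⟨gam z N c q q', ?_, ?_, rfl⟩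
    · refine Measure.ext fun T hT => ?_
      rw [Measure.map_apply measurable_fst hT, ← Set.prod_univ,
        gam_fst z N c q q' hadm (hcovN c.1) hT]
    · refine Measure.ext fun T hT => ?_
      rw [Measure.map_apply measurable_snd hT, ← Set.univ_prod,
        gam_snd z N c q q' hadm (hcovN c.1) hT]
  have hval : ∫ p, dist p.1 p.2 ^ 2 ∂(gam z N c q q') ≤ (Vval z N D c).toReal := by
    rw [coupling_value]
    exact ENNReal.toReal_mono (Vval_ne_top z N D c)
      (gam_cost z N D c q q' hadm (hcovN c.1) hDd)
  exact le_trans (csInf_le (innSet_bddBelow q q') hmem) hval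

lemma ofReal_W2sq_le_Gfun (hcovN : ∀ n, Set.univ ⊆ ⋃ i ∈ Finset.range (N n),
      Metric.ball (z i) (del n))
    (hDd : ∀ u v : U, dist u v ≤ D) :
    ENNReal.ofReal (W2sq (fun uu vv : U => dist uu vv ^ 2) q q') ≤ Gfun z N D (q, q') := by
  refine le_iInf fun c => ?_
  rcases eq_or_ne (gfun z N D c (q, q')) ⊤ with h | h
  · rw [h]; exact le_top
  · have h1 := W2sq_le_toReal_gfun z N D q q' hcovN hDd c h
    have h2 : gfun z N D c (q, q') = Vval z N D c := by
      rw [gfun] at h ⊢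
      by_cases hcond : Adm z N c q q' ∧ q Set.univ = 1 ∧ q' Set.univ = 1
      · rw [if_pos hcond]
      · rw [if_neg hcond] at h; exact absurd rfl h
    rw [h2]
    calc ENNReal.ofReal (W2sq (fun uu vv : U => dist uu vv ^ 2) q q')
        ≤ ENNReal.ofReal ((Vval z N D c).toReal) := ENNReal.ofReal_le_ofReal h1
      _ = Vval z N D c := ENNReal.ofReal_toReal (Vval_ne_top z N D c)

end Inner

set_option maxHeartbeats 1000000 in
lemma Gfun_le_ofReal (q q' : Measure U) [IsProbabilityMeasure q] [IsProbabilityMeasure q']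
    (hcovN : ∀ n, Set.univ ⊆ ⋃ i ∈ Finset.range (N n), Metric.ball (z i) (del n))
    (hD0 : 0 ≤ D) (hDd : ∀ u v : U, dist u v ≤ D) :
    ∀ r ∈ innSet q q', Gfun z N D (q, q') ≤ ENNReal.ofReal r := by
  rintro r ⟨π, hfst, hsnd, rfl⟩
  haveI hπ : IsProbabilityMeasure π := coupling_prob q hfst
  set R := ∫⁻ p, ENNReal.ofReal (dist p.1 p.2 ^ 2) ∂π with hRdef
  have hRtop : R ≠ ⊤ := ne_of_lt (lt_of_le_of_lt
    (coupling_lintegral_le D hDd) ENNReal.ofReal_lt_top)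
  have hval : ENNReal.ofReal (∫ p, dist p.1 p.2 ^ 2 ∂π) = R := by
    rw [coupling_value, ENNReal.ofReal_toReal hRtop]
  rw [show (∫ p, (fun uu vv : U => dist uu vv ^ 2) p.1 p.2 ∂π) = ∫ p, dist p.1 p.2 ^ 2 ∂π
    from rfl, hval]
  apply ENNReal.le_of_forall_pos_le_add
  intro ε' hε' _
  set ε : ℝ := (ε' : ℝ) with hεdef
  have hε : 0 < ε := hε'
  -- choose the mesh size
  have hε₀pos : 0 < (ε / 2) / (8 * D + 17) := by positivity
  obtain ⟨n, hn⟩ := exists_nat_one_div_lt hε₀pos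
  have hδpos := del_pos n
  have hδ1 : del n ≤ 1 := by
    rw [del, div_le_one (by positivity)]
    have : (1 : ℝ) ≤ (n : ℝ) + 1 := by
      have : (0:ℝ) ≤ (n:ℝ) := Nat.cast_nonneg n
      linarith
    exact this
  have hδn : del n < (ε / 2) / (8 * D + 17) := hn
  have hδsmall : del n * (8 * D + 16) ≤ ε / 2 := by
    have h1 : del n * (8 * D + 17) ≤ ε / 2 := by
      rw [← div_mul_cancel₀ (ε / 2) (show (8 * D + 17 : ℝ) ≠ 0 by positivity)]
      exact mul_le_mul_of_nonneg_right hδn.le (by positivity)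
    nlinarith [hδpos]
  -- the discretized masses
  set P : ℕ → Set U := piece z n with hPdef
  have hPm : ∀ i, MeasurableSet (P i) := fun i => measurableSet_piece z n i
  have hPd : ∀ {i j : ℕ}, i ≠ j → Disjoint (P i) (P j) := fun h => piece_disjoint z n h
  have hPcov : ⋃ i ∈ Finset.range (N n), P i = Set.univ := piece_biUnion z (hcovN n)
  set m : ℕ → ℕ → ℝ≥0∞ := fun i j => π ((P i) ×ˢ (P j)) with hmdef
  have hrow : ∀ i, ∑ j ∈ Finset.range (N n), m i j = q (P i) := by
    intro i
    rw [← measure_biUnion_finset (fun j₁ _ j₂ _ hne => by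
        refine Set.disjoint_left.mpr ?_
        rintro ⟨y1, y2⟩ ⟨-, hb⟩ ⟨-, hb'⟩
        exact Set.disjoint_left.mp (hPd hne) hb hb')
      (fun j _ => (hPm i).prod (hPm j))]
    have hunion : ⋃ j ∈ Finset.range (N n), (P i) ×ˢ (P j) = (P i) ×ˢ (Set.univ : Set U) := by
      ext ⟨y1, y2⟩
      simp only [Set.mem_iUnion, Set.mem_prod, Set.mem_univ, and_true]
      constructor
      · rintro ⟨j, _, h1, h2⟩; exact h1
      · intro h1
        have : y2 ∈ ⋃ j ∈ Finset.range (N n), P j := hPcov ▸ Set.mem_univ y2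
        simp only [Set.mem_iUnion] at this
        obtain ⟨j, hj, hy2⟩ := this
        exact ⟨j, hj, h1, hy2⟩
    rw [hunion, Set.prod_univ, ← Measure.map_apply measurable_fst (hPm i), hfst]
  have hcol : ∀ j, ∑ i ∈ Finset.range (N n), m i j = q' (P j) := by
    intro j
    rw [← measure_biUnion_finset (fun i₁ _ i₂ _ hne => by
        refine Set.disjoint_left.mpr ?_
        rintro ⟨y1, y2⟩ ⟨ha, -⟩ ⟨ha', -⟩
        exact Set.disjoint_left.mp (hPd hne) ha ha')
      (fun i _ => (hPm i).prod (hPm j))]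
    have hunion : ⋃ i ∈ Finset.range (N n), (P i) ×ˢ (P j) = (Set.univ : Set U) ×ˢ (P j) := by
      ext ⟨y1, y2⟩
      simp only [Set.mem_iUnion, Set.mem_prod, Set.mem_univ, true_and]
      constructor
      · rintro ⟨i, _, h1, h2⟩; exact h2
      · intro h2
        have : y1 ∈ ⋃ i ∈ Finset.range (N n), P i := hPcov ▸ Set.mem_univ y1
        simp only [Set.mem_iUnion] at this
        obtain ⟨i, hi, hy1⟩ := this
        exact ⟨i, hi, hy1, h2⟩
    rw [hunion, Set.univ_prod, ← Measure.map_apply measurable_snd (hPm j), hsnd]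
  have htot : ∑ i ∈ Finset.range (N n), ∑ j ∈ Finset.range (N n), m i j = 1 := by
    rw [Finset.sum_congr rfl fun i _ => hrow i, sum_piece_mass z q (hcovN n)]
  -- rational approximations from below
  set δ' : ℝ := (ε / 2) / ((N n : ℝ) * (N n : ℝ) * D ^ 2 + 1) with hδ'def
  have hδ'pos : 0 < δ' := by positivity
  have hex : ∀ i j : ℕ, ∃ gg : ℚ, ENNReal.ofReal (gg : ℝ) ≤ m i j ∧
      m i j ≤ ENNReal.ofReal (gg : ℝ) + ENNReal.ofReal δ' := by
    intro i j
    have hmt : m i j = ENNReal.ofReal ((m i j).toReal) :=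
      (ENNReal.ofReal_toReal (measure_ne_top π _)).symm
    obtain ⟨gg, hg1, hg2⟩ := exists_rat_btwn (sub_lt_self ((m i j).toReal) hδ'pos)
    refine ⟨gg, ?_, ?_⟩
    · rw [hmt]; exact ENNReal.ofReal_le_ofReal hg2.le
    · rw [hmt]
      calc ENNReal.ofReal ((m i j).toReal) ≤ ENNReal.ofReal ((gg : ℝ) + δ') :=
            ENNReal.ofReal_le_ofReal (by linarith)
        _ ≤ ENNReal.ofReal (gg : ℝ) + ENNReal.ofReal δ' := ENNReal.ofReal_add_le
  choose g hg1 hg2 using hex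
  -- the candidate
  set cand : Cand := ⟨n, Finsupp.onFinset ((Finset.range (N n)) ×ˢ (Finset.range (N n)))
    (fun p => if p ∈ (Finset.range (N n)) ×ˢ (Finset.range (N n)) then g p.1 p.2 else 0)
    (fun p hp => by
      by_contra hmem
      apply hp
      simp [hmem])⟩ with hcand
  have hcc : ∀ i j : ℕ, i ∈ Finset.range (N n) → j ∈ Finset.range (N n) →
      cc cand i j = ENNReal.ofReal (g i j : ℝ) := by
    intro i j hi hj
    have : cand.2 (i, j) = g i j := by
      rw [hcand, Finsupp.onFinset_apply, if_pos (Finset.mem_product.mpr ⟨hi, hj⟩)]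
    rw [cc, this]
  have hN1 : N cand.1 = N n := rfl
  have hadm : Adm z N cand q q' := by
    constructor
    · intro i hi
      rw [rowS]
      calc ∑ j ∈ Finset.range (N cand.1), cc cand i j
          ≤ ∑ j ∈ Finset.range (N n), m i j := by
            rw [hN1]
            exact Finset.sum_le_sum fun j hj => (hcc i j hi hj) ▸ hg1 i j
        _ = q (piece z cand.1 i) := hrow i
    · intro j hj
      rw [colS]
      calc ∑ i ∈ Finset.range (N cand.1), cc cand i j
          ≤ ∑ i ∈ Finset.range (N n), m i j := by
            rw [hN1]
            exact Finset.sum_le_sum fun i hi => (hcc i j hi hj) ▸ hg1 i j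
        _ = q' (piece z cand.1 j) := hcol j
  -- cost bound, main part
  have hpart1 : ∑ i ∈ Finset.range (N n), ∑ j ∈ Finset.range (N n),
      cc cand i j * ENNReal.ofReal ((dist (z i : U) (z j : U) + 2 * del n) ^ 2)
      ≤ R + ENNReal.ofReal (ε / 2) := by
    have hstep : ∀ i ∈ Finset.range (N n), ∀ j ∈ Finset.range (N n),
        cc cand i j * ENNReal.ofReal ((dist (z i : U) (z j : U) + 2 * del n) ^ 2)
        ≤ ∫⁻ x in (P i) ×ˢ (P j),
            (ENNReal.ofReal (dist x.1 x.2 ^ 2) +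
              ENNReal.ofReal (del n * (8 * D + 16))) ∂π := by
      intro i hi j hj
      have hccle : cc cand i j ≤ m i j := (hcc i j hi hj) ▸ hg1 i j
      calc cc cand i j * ENNReal.ofReal ((dist (z i : U) (z j : U) + 2 * del n) ^ 2)
          ≤ m i j * ENNReal.ofReal ((dist (z i : U) (z j : U) + 2 * del n) ^ 2) :=
            mul_le_mul_left hccle _
        _ = ∫⁻ _x in (P i) ×ˢ (P j),
              ENNReal.ofReal ((dist (z i : U) (z j : U) + 2 * del n) ^ 2) ∂π := by
            rw [setLIntegral_const, mul_comm]
        _ ≤ ∫⁻ x in (P i) ×ˢ (P j),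
              (ENNReal.ofReal (dist x.1 x.2 ^ 2) +
                ENNReal.ofReal (del n * (8 * D + 16))) ∂π := by
            refine setLIntegral_mono' ((hPm i).prod (hPm j)) ?_
            rintro ⟨x1, x2⟩ ⟨hx1, hx2⟩
            have h1 : dist x1 (z i) < del n := Metric.mem_ball.mp (piece_subset z n i hx1)
            have h2 : dist x2 (z j) < del n := Metric.mem_ball.mp (piece_subset z n j hx2)
            have h3 : dist (z i : U) (z j : U) ≤ dist x1 x2 + 2 * del n := by
              have h4 := dist_triangle4 (z i : U) x1 x2 (z j)
              have h5 : dist (z i : U) x1 = dist x1 (z i) := dist_comm _ _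
              have h6 : dist x2 (z j : U) = dist x2 (z j) := rfl
              linarith
            have hreal : (dist (z i : U) (z j : U) + 2 * del n) ^ 2
                ≤ dist x1 x2 ^ 2 + del n * (8 * D + 16) := by
              have e1 : (dist (z i : U) (z j : U) + 2 * del n) ^ 2
                  ≤ (dist x1 x2 + 4 * del n) ^ 2 :=
                pow_le_pow_left₀ (by positivity) (by linarith) 2
              have e2 : (dist x1 x2 + 4 * del n) ^ 2
                  = dist x1 x2 ^ 2 + 8 * (del n * dist x1 x2) + 16 * del n ^ 2 := by ring
              have e3 : del n * dist x1 x2 ≤ del n * D :=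
                mul_le_mul_of_nonneg_left (hDd x1 x2) hδpos.le
              have e4 : del n ^ 2 ≤ del n := by nlinarith
              nlinarith
            calc ENNReal.ofReal ((dist (z i : U) (z j : U) + 2 * del n) ^ 2)
                ≤ ENNReal.ofReal (dist x1 x2 ^ 2 + del n * (8 * D + 16)) :=
                  ENNReal.ofReal_le_ofReal hreal
              _ ≤ ENNReal.ofReal (dist x1 x2 ^ 2) +
                  ENNReal.ofReal (del n * (8 * D + 16)) := ENNReal.ofReal_add_le
    calc ∑ i ∈ Finset.range (N n), ∑ j ∈ Finset.range (N n),
        cc cand i j * ENNReal.ofReal ((dist (z i : U) (z j : U) + 2 * del n) ^ 2)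
        ≤ ∑ i ∈ Finset.range (N n), ∑ j ∈ Finset.range (N n),
            ∫⁻ x in (P i) ×ˢ (P j),
              (ENNReal.ofReal (dist x.1 x.2 ^ 2) +
                ENNReal.ofReal (del n * (8 * D + 16))) ∂π :=
          Finset.sum_le_sum fun i hi => Finset.sum_le_sum fun j hj => hstep i hi j hj
      _ = ∫⁻ x in ⋃ p ∈ (Finset.range (N n)) ×ˢ (Finset.range (N n)), (P p.1) ×ˢ (P p.2),
            (ENNReal.ofReal (dist x.1 x.2 ^ 2) +
              ENNReal.ofReal (del n * (8 * D + 16))) ∂π := by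
          rw [lintegral_biUnion_finset (fun p₁ hp₁ p₂ hp₂ hne => by
              refine Set.disjoint_left.mpr ?_
              rintro ⟨y1, y2⟩ ⟨ha, hb⟩ ⟨ha', hb'⟩
              rcases eq_or_ne p₁.1 p₂.1 with h | h
              · have h2 : p₁.2 ≠ p₂.2 := fun h2 => hne (Prod.ext h h2)
                exact Set.disjoint_left.mp (hPd h2) hb hb'
              · exact Set.disjoint_left.mp (hPd h) ha ha')
            (fun p _ => (hPm p.1).prod (hPm p.2))]
          rw [Finset.sum_product]
      _ = ∫⁻ x, (ENNReal.ofReal (dist x.1 x.2 ^ 2) +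
              ENNReal.ofReal (del n * (8 * D + 16))) ∂π := by
          have huniv : ⋃ p ∈ (Finset.range (N n)) ×ˢ (Finset.range (N n)),
              (P p.1) ×ˢ (P p.2) = Set.univ := by
            apply Set.eq_univ_of_univ_subset
            rintro ⟨y1, y2⟩ -
            have hy1 : y1 ∈ ⋃ i ∈ Finset.range (N n), P i := hPcov ▸ Set.mem_univ y1
            have hy2 : y2 ∈ ⋃ j ∈ Finset.range (N n), P j := hPcov ▸ Set.mem_univ y2
            simp only [Set.mem_iUnion] at hy1 hy2
            obtain ⟨i, hi, hy1⟩ := hy1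
            obtain ⟨j, hj, hy2⟩ := hy2
            simp only [Set.mem_iUnion]
            exact ⟨(i, j), Finset.mem_product.mpr ⟨hi, hj⟩, hy1, hy2⟩
          rw [huniv, setLIntegral_univ]
      _ = R + ENNReal.ofReal (del n * (8 * D + 16)) := by
          rw [lintegral_add_right _ measurable_const, lintegral_const, measure_univ, mul_one]
      _ ≤ R + ENNReal.ofReal (ε / 2) :=
          add_le_add_right (ENNReal.ofReal_le_ofReal hδsmall) _
  -- cost bound, leftover part
  have hpart2 : (1 - Stot N cand) * ENNReal.ofReal (D ^ 2) ≤ ENNReal.ofReal (ε / 2) := by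
    have hStot : Stot N cand = ∑ p ∈ (Finset.range (N n)) ×ˢ (Finset.range (N n)),
        ENNReal.ofReal (g p.1 p.2 : ℝ) := by
      rw [Stot, Finset.sum_product]
      exact Finset.sum_congr rfl fun i hi => Finset.sum_congr rfl fun j hj => hcc i j hi hj
    have htot' : ∑ p ∈ (Finset.range (N n)) ×ˢ (Finset.range (N n)), m p.1 p.2 = 1 := by
      rw [Finset.sum_product]; exact htot
    have hsub : (1 : ℝ≥0∞) - Stot N cand
        ≤ ((N n * N n : ℕ) : ℝ≥0∞) * ENNReal.ofReal δ' := by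
      rw [hStot, ← htot']
      rw [← enn_sum_tsub _ _ _ (fun p _ => hg1 p.1 p.2) (by rw [htot']; exact one_ne_top)]
      calc ∑ p ∈ (Finset.range (N n)) ×ˢ (Finset.range (N n)),
            (m p.1 p.2 - ENNReal.ofReal (g p.1 p.2 : ℝ))
          ≤ ∑ _p ∈ (Finset.range (N n)) ×ˢ (Finset.range (N n)), ENNReal.ofReal δ' := by
            refine Finset.sum_le_sum fun p _ => ?_
            rw [tsub_le_iff_right]
            calc m p.1 p.2 ≤ ENNReal.ofReal (g p.1 p.2 : ℝ) + ENNReal.ofReal δ' :=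
                  hg2 p.1 p.2
              _ = ENNReal.ofReal δ' + ENNReal.ofReal (g p.1 p.2 : ℝ) := add_comm _ _
        _ = ((N n * N n : ℕ) : ℝ≥0∞) * ENNReal.ofReal δ' := by
            rw [Finset.sum_const, Finset.card_product, Finset.card_range, nsmul_eq_mul]
    calc (1 - Stot N cand) * ENNReal.ofReal (D ^ 2)
        ≤ ((N n * N n : ℕ) : ℝ≥0∞) * ENNReal.ofReal δ' * ENNReal.ofReal (D ^ 2) :=
          mul_le_mul_left hsub _
      _ = ENNReal.ofReal (((N n * N n : ℕ) : ℝ) * δ' * D ^ 2) := by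
          rw [ENNReal.ofReal_mul (by positivity), ENNReal.ofReal_mul (by positivity),
            ENNReal.ofReal_natCast]
      _ ≤ ENNReal.ofReal (ε / 2) := by
          apply ENNReal.ofReal_le_ofReal
          have hgoal : ((N n * N n : ℕ) : ℝ) * δ' * D ^ 2
              = (ε / 2) * (((N n : ℝ) * (N n : ℝ) * D ^ 2) /
                  ((N n : ℝ) * (N n : ℝ) * D ^ 2 + 1)) := by
            rw [hδ'def]; push_cast; ring
          rw [hgoal]
          have hdiv : ((N n : ℝ) * (N n : ℝ) * D ^ 2) /
              ((N n : ℝ) * (N n : ℝ) * D ^ 2 + 1) ≤ 1 := by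
            rw [div_le_one (by positivity)]
            linarith [mul_nonneg (mul_nonneg (Nat.cast_nonneg (N n) : (0:ℝ) ≤ (N n:ℝ))
              (Nat.cast_nonneg (N n))) (sq_nonneg D)]
          calc (ε / 2) * (((N n : ℝ) * (N n : ℝ) * D ^ 2) /
                ((N n : ℝ) * (N n : ℝ) * D ^ 2 + 1))
              ≤ (ε / 2) * 1 := mul_le_mul_of_nonneg_left hdiv (by positivity)
            _ = ε / 2 := mul_one _
  -- conclusion
  have hgf : gfun z N D cand (q, q') = Vval z N D cand := by
    rw [gfun, if_pos ⟨hadm, measure_univ, measure_univ⟩]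
  calc Gfun z N D (q, q') ≤ gfun z N D cand (q, q') := iInf_le _ cand
    _ = Vval z N D cand := hgf
    _ ≤ (R + ENNReal.ofReal (ε / 2)) + ENNReal.ofReal (ε / 2) := by
        rw [Vval]
        exact add_le_add hpart1 hpart2
    _ = R + (ENNReal.ofReal (ε / 2) + ENNReal.ofReal (ε / 2)) := by rw [add_assoc]
    _ = R + ↑ε' := by
        rw [← ENNReal.ofReal_add (by positivity) (by positivity)]
        rw [add_halves, hεdef, ENNReal.ofReal_coe_nnreal]

section Bridge

variable (q q' : Measure U) [IsProbabilityMeasure q] [IsProbabilityMeasure q']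

lemma W2sq_inner_nonneg : 0 ≤ W2sq (fun uu vv : U => dist uu vv ^ 2) q q' :=
  Real.sInf_nonneg (innSet_nonneg q q')

lemma inner_eq_Gfun
    (hcovN : ∀ n, Set.univ ⊆ ⋃ i ∈ Finset.range (N n), Metric.ball (z i) (del n))
    (hD0 : 0 ≤ D) (hDd : ∀ u v : U, dist u v ≤ D) :
    ENNReal.ofReal (W2sq (fun uu vv : U => dist uu vv ^ 2) q q') = Gfun z N D (q, q') := by
  refine le_antisymm (ofReal_W2sq_le_Gfun z N D q q' hcovN hDd) ?_
  apply ENNReal.le_of_forall_pos_le_add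
  intro ε' hε' _
  have hlt : sInf (innSet q q')
      < sInf (innSet q q') + (ε' : ℝ) := lt_add_of_pos_right _ (by exact_mod_cast hε')
  obtain ⟨r, hrmem, hrlt⟩ := (csInf_lt_iff (innSet_bddBelow q q') (innSet_nonempty q q')).mp hlt
  calc Gfun z N D (q, q') ≤ ENNReal.ofReal r :=
        Gfun_le_ofReal z N D q q' hcovN hD0 hDd r hrmem
    _ ≤ ENNReal.ofReal (sInf (innSet q q') + (ε' : ℝ)) := ENNReal.ofReal_le_ofReal hrlt.le
    _ ≤ ENNReal.ofReal (sInf (innSet q q')) + ENNReal.ofReal ((ε' : ℝ)) := ENNReal.ofReal_add_le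
    _ = ENNReal.ofReal (W2sq (fun uu vv : U => dist uu vv ^ 2) q q') + ↑ε' := by
        rw [ENNReal.ofReal_coe_nnreal]; rfl

lemma Gfun_ne_top
    (hcovN : ∀ n, Set.univ ⊆ ⋃ i ∈ Finset.range (N n), Metric.ball (z i) (del n))
    (hD0 : 0 ≤ D) (hDd : ∀ u v : U, dist u v ≤ D) :
    Gfun z N D (q, q') ≠ ⊤ := by
  rw [← inner_eq_Gfun z N D q q' hcovN hD0 hDd]
  exact ENNReal.ofReal_ne_top

lemma Gfun_eq_sq
    (hcovN : ∀ n, Set.univ ⊆ ⋃ i ∈ Finset.range (N n), Metric.ball (z i) (del n))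
    (hD0 : 0 ≤ D) (hDd : ∀ u v : U, dist u v ≤ D) :
    Gfun z N D (q, q')
      = ENNReal.ofReal ((W2 (fun uu vv : U => dist uu vv ^ 2) q q') ^ 2) := by
  rw [← inner_eq_Gfun z N D q q' hcovN hD0 hDd, W2,
    Real.sq_sqrt (W2sq_inner_nonneg q q')]

lemma W2_inner_eq_sqrt_Gfun
    (hcovN : ∀ n, Set.univ ⊆ ⋃ i ∈ Finset.range (N n), Metric.ball (z i) (del n))
    (hD0 : 0 ≤ D) (hDd : ∀ u v : U, dist u v ≤ D) :
    W2 (fun uu vv : U => dist uu vv ^ 2) q q'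
      = Real.sqrt ((Gfun z N D (q, q')).toReal) := by
  rw [← inner_eq_Gfun z N D q q' hcovN hD0 hDd,
    ENNReal.toReal_ofReal (W2sq_inner_nonneg q q'), W2]

end Bridge

/-! ### Measurability of `Gfun` -/

lemma measurable_gfun (c : Cand) : Measurable (gfun z N D c) := by
  have h1 : ∀ i : ℕ, MeasurableSet {qq : Measure U × Measure U |
      rowS N c i ≤ qq.1 (piece z c.1 i)} :=
    fun i => measurableSet_le measurable_const
      ((Measure.measurable_coe (measurableSet_piece z c.1 i)).comp measurable_fst)
  have h2 : ∀ j : ℕ, MeasurableSet {qq : Measure U × Measure U |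
      colS N c j ≤ qq.2 (piece z c.1 j)} :=
    fun j => measurableSet_le measurable_const
      ((Measure.measurable_coe (measurableSet_piece z c.1 j)).comp measurable_snd)
  have h3 : MeasurableSet {qq : Measure U × Measure U | qq.1 Set.univ = 1} :=
    ((Measure.measurable_coe MeasurableSet.univ).comp measurable_fst)
      (measurableSet_singleton 1)
  have h4 : MeasurableSet {qq : Measure U × Measure U | qq.2 Set.univ = 1} :=
    ((Measure.measurable_coe MeasurableSet.univ).comp measurable_snd)
      (measurableSet_singleton 1)
  have hset : MeasurableSet {qq : Measure U × Measure U |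
      Adm z N c qq.1 qq.2 ∧ qq.1 Set.univ = 1 ∧ qq.2 Set.univ = 1} := by
    have heq : {qq : Measure U × Measure U |
        Adm z N c qq.1 qq.2 ∧ qq.1 Set.univ = 1 ∧ qq.2 Set.univ = 1}
      = (((⋂ i ∈ Finset.range (N c.1), {qq : Measure U × Measure U |
            rowS N c i ≤ qq.1 (piece z c.1 i)}) ∩
          (⋂ j ∈ Finset.range (N c.1), {qq : Measure U × Measure U |
            colS N c j ≤ qq.2 (piece z c.1 j)})) ∩
         ({qq : Measure U × Measure U | qq.1 Set.univ = 1} ∩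
          {qq : Measure U × Measure U | qq.2 Set.univ = 1})) := by
      ext qq
      simp only [Adm, Set.mem_setOf_eq, Set.mem_inter_iff, Set.mem_iInter]
    rw [heq]
    exact (((MeasurableSet.biInter (Finset.range (N c.1)).countable_toSet fun i _ => h1 i).inter
      (MeasurableSet.biInter (Finset.range (N c.1)).countable_toSet fun j _ => h2 j)).inter
      (h3.inter h4))
  exact Measurable.ite hset measurable_const measurable_const

lemma measurable_Gfun : Measurable (Gfun z N D) :=
  Measurable.iInf fun c => measurable_gfun z N D c

/-! ### The measurable ε-optimal coupling kernel -/

def troc (q : Measure U) : Measure U := if q Set.univ = 1 then q else 0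

lemma troc_of_prob {q : Measure U} (h : q Set.univ = 1) : troc q = q := if_pos h

lemma measurable_troc_eval {s : Set U} (hs : MeasurableSet s) :
    Measurable (fun q : Measure U => troc q s) := by
  have heq : (fun q : Measure U => troc q s)
      = fun q : Measure U => if q Set.univ = 1 then q s else 0 := by
    funext q
    rw [troc]
    split <;> simp
  rw [heq]
  exact Measurable.ite
    ((Measure.measurable_coe MeasurableSet.univ) (measurableSet_singleton 1))
    (Measure.measurable_coe hs) measurable_const

lemma troc_mass_le (q : Measure U) : troc q Set.univ ≤ 1 := by
  rw [troc]; split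
  · exact le_of_eq (by assumption)
  · simp

lemma lov_mass_le_mass (c : Cand) (q : Measure U) :
    lov z N c q Set.univ ≤ q Set.univ := by
  rw [lov_apply z N c q MeasurableSet.univ]
  calc ∑ i ∈ Finset.range (N c.1), (q (piece z c.1 i) - rowS N c i) *
        (q (piece z c.1 i))⁻¹ * q (Set.univ ∩ piece z c.1 i)
      ≤ ∑ i ∈ Finset.range (N c.1), q (Set.univ ∩ piece z c.1 i) := by
        refine Finset.sum_le_sum fun i _ => ?_
        have h1 : (q (piece z c.1 i) - rowS N c i) * (q (piece z c.1 i))⁻¹ ≤ 1 :=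
          le_trans (mul_le_mul_left tsub_le_self _) (enn_mul_inv_self_le_one _)
        calc (q (piece z c.1 i) - rowS N c i) * (q (piece z c.1 i))⁻¹ *
              q (Set.univ ∩ piece z c.1 i)
            ≤ 1 * q (Set.univ ∩ piece z c.1 i) := mul_le_mul_left h1 _
          _ = q (Set.univ ∩ piece z c.1 i) := one_mul _
    _ = q (⋃ i ∈ Finset.range (N c.1), piece z c.1 i) := by
        simp only [Set.univ_inter]
        exact (measure_biUnion_finset
          (fun i _ j _ hij => piece_disjoint z c.1 hij)
          (fun i _ => measurableSet_piece z c.1 i)).symm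
    _ ≤ q Set.univ := measure_mono (Set.subset_univ _)

lemma lov'_mass_le_mass (c : Cand) (q' : Measure U) :
    lov' z N c q' Set.univ ≤ q' Set.univ := by
  rw [lov'_apply z N c q' MeasurableSet.univ]
  calc ∑ j ∈ Finset.range (N c.1), (q' (piece z c.1 j) - colS N c j) *
        (q' (piece z c.1 j))⁻¹ * q' (Set.univ ∩ piece z c.1 j)
      ≤ ∑ j ∈ Finset.range (N c.1), q' (Set.univ ∩ piece z c.1 j) := by
        refine Finset.sum_le_sum fun j _ => ?_
        have h1 : (q' (piece z c.1 j) - colS N c j) * (q' (piece z c.1 j))⁻¹ ≤ 1 :=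
          le_trans (mul_le_mul_left tsub_le_self _) (enn_mul_inv_self_le_one _)
        calc (q' (piece z c.1 j) - colS N c j) * (q' (piece z c.1 j))⁻¹ *
              q' (Set.univ ∩ piece z c.1 j)
            ≤ 1 * q' (Set.univ ∩ piece z c.1 j) := mul_le_mul_left h1 _
          _ = q' (Set.univ ∩ piece z c.1 j) := one_mul _
    _ = q' (⋃ j ∈ Finset.range (N c.1), piece z c.1 j) := by
        simp only [Set.univ_inter]
        exact (measure_biUnion_finset
          (fun i _ j _ hij => piece_disjoint z c.1 hij)
          (fun i _ => measurableSet_piece z c.1 i)).symm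
    _ ≤ q' Set.univ := measure_mono (Set.subset_univ _)

/-- The pair space. -/
def AdmFull (c : Cand) (p : (ℝ × Measure U) × (ℝ × Measure U)) : Prop :=
  Adm z N c p.1.2 p.2.2 ∧ p.1.2 Set.univ = 1 ∧ p.2.2 Set.univ = 1

lemma measurableSet_admSet (c : Cand) : MeasurableSet {qq : Measure U × Measure U |
    Adm z N c qq.1 qq.2 ∧ qq.1 Set.univ = 1 ∧ qq.2 Set.univ = 1} := by
  have h1 : ∀ i : ℕ, MeasurableSet {qq : Measure U × Measure U |
      rowS N c i ≤ qq.1 (piece z c.1 i)} :=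
    fun i => measurableSet_le measurable_const
      ((Measure.measurable_coe (measurableSet_piece z c.1 i)).comp measurable_fst)
  have h2 : ∀ j : ℕ, MeasurableSet {qq : Measure U × Measure U |
      colS N c j ≤ qq.2 (piece z c.1 j)} :=
    fun j => measurableSet_le measurable_const
      ((Measure.measurable_coe (measurableSet_piece z c.1 j)).comp measurable_snd)
  have h3 : MeasurableSet {qq : Measure U × Measure U | qq.1 Set.univ = 1} :=
    ((Measure.measurable_coe MeasurableSet.univ).comp measurable_fst)
      (measurableSet_singleton 1)
  have h4 : MeasurableSet {qq : Measure U × Measure U | qq.2 Set.univ = 1} :=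
    ((Measure.measurable_coe MeasurableSet.univ).comp measurable_snd)
      (measurableSet_singleton 1)
  have heq : {qq : Measure U × Measure U |
      Adm z N c qq.1 qq.2 ∧ qq.1 Set.univ = 1 ∧ qq.2 Set.univ = 1}
    = (((⋂ i ∈ Finset.range (N c.1), {qq : Measure U × Measure U |
          rowS N c i ≤ qq.1 (piece z c.1 i)}) ∩
        (⋂ j ∈ Finset.range (N c.1), {qq : Measure U × Measure U |
          colS N c j ≤ qq.2 (piece z c.1 j)})) ∩
       ({qq : Measure U × Measure U | qq.1 Set.univ = 1} ∩
        {qq : Measure U × Measure U | qq.2 Set.univ = 1})) := by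
    ext qq
    simp only [Adm, Set.mem_setOf_eq, Set.mem_inter_iff, Set.mem_iInter]
  rw [heq]
  exact (((MeasurableSet.biInter (Finset.range (N c.1)).countable_toSet fun i _ => h1 i).inter
    (MeasurableSet.biInter (Finset.range (N c.1)).countable_toSet fun j _ => h2 j)).inter
    (h3.inter h4))

lemma measurable_pairproj :
    Measurable (fun p : (ℝ × Measure U) × (ℝ × Measure U) => (p.1.2, p.2.2)) :=
  ((measurable_snd.comp measurable_fst).prodMk (measurable_snd.comp measurable_snd))

lemma measurableSet_AdmFull (c : Cand) :
    MeasurableSet {p : (ℝ × Measure U) × (ℝ × Measure U) | AdmFull z N c p} :=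
  measurable_pairproj (measurableSet_admSet z N c)

open Classical in
def gamK (c : Cand) (p : (ℝ × Measure U) × (ℝ × Measure U)) : Measure (U × U) :=
  if AdmFull z N c p then gam z N c (troc p.1.2) (troc p.2.2) else 0

lemma measurable_gamK_eval (c : Cand) {s : Set (U × U)} (hs : MeasurableSet s) :
    Measurable (fun p : (ℝ × Measure U) × (ℝ × Measure U) => gamK z N c p s) := by
  classical
  have hmain : Measurable (fun p : (ℝ × Measure U) × (ℝ × Measure U) =>
      gam z N c (troc p.1.2) (troc p.2.2) s) := by
    have hgam : ∀ p : (ℝ × Measure U) × (ℝ × Measure U),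
        gam z N c (troc p.1.2) (troc p.2.2) s
        = (∑ i ∈ Finset.range (N c.1), ∑ j ∈ Finset.range (N c.1),
            (cc c i j * (troc p.1.2 (piece z c.1 i))⁻¹ * (troc p.2.2 (piece z c.1 j))⁻¹) *
              (((troc p.1.2).restrict (piece z c.1 i)).prod
                ((troc p.2.2).restrict (piece z c.1 j))) s)
          + (1 - Stot N c)⁻¹ *
              ((lov z N c (troc p.1.2)).prod (lov' z N c (troc p.2.2))) s := by
      intro p
      rw [gam, Measure.add_apply, finset_sum_measure_apply, Measure.smul_apply, smul_eq_mul]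
      congr 1
      refine Finset.sum_congr rfl fun i _ => ?_
      rw [finset_sum_measure_apply]
      exact Finset.sum_congr rfl fun j _ => by rw [Measure.smul_apply, smul_eq_mul]
    simp_rw [hgam]
    apply Measurable.add
    · apply Finset.measurable_sum
      intro i _
      apply Finset.measurable_sum
      intro j _
      apply Measurable.mul
      · apply Measurable.mul
        · exact measurable_const.mul
            (((measurable_troc_eval (measurableSet_piece z c.1 i)).comp
              (measurable_snd.comp measurable_fst)).inv)
        · exact ((measurable_troc_eval (measurableSet_piece z c.1 j)).comp
            (measurable_snd.comp measurable_snd)).inv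
      · apply measurable_prod_apply
          (μ := fun p : (ℝ × Measure U) × (ℝ × Measure U) =>
            (troc p.1.2).restrict (piece z c.1 i))
          (ν := fun p : (ℝ × Measure U) × (ℝ × Measure U) =>
            (troc p.2.2).restrict (piece z c.1 j))
        · intro t ht
          have : ∀ p : (ℝ × Measure U) × (ℝ × Measure U),
              (troc p.1.2).restrict (piece z c.1 i) t = troc p.1.2 (t ∩ piece z c.1 i) :=
            fun p => Measure.restrict_apply ht
          simp_rw [this]
          exact (measurable_troc_eval (ht.inter (measurableSet_piece z c.1 i))).comp
            (measurable_snd.comp measurable_fst)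
        · intro t ht
          have : ∀ p : (ℝ × Measure U) × (ℝ × Measure U),
              (troc p.2.2).restrict (piece z c.1 j) t = troc p.2.2 (t ∩ piece z c.1 j) :=
            fun p => Measure.restrict_apply ht
          simp_rw [this]
          exact (measurable_troc_eval (ht.inter (measurableSet_piece z c.1 j))).comp
            (measurable_snd.comp measurable_snd)
        · intro p
          rw [Measure.restrict_apply_univ]
          exact le_trans (measure_mono (Set.subset_univ _)) (troc_mass_le _)
        · intro p
          rw [Measure.restrict_apply_univ]
          exact le_trans (measure_mono (Set.subset_univ _)) (troc_mass_le _)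
        · exact hs
    · apply Measurable.mul measurable_const
      apply measurable_prod_apply
        (μ := fun p : (ℝ × Measure U) × (ℝ × Measure U) => lov z N c (troc p.1.2))
        (ν := fun p : (ℝ × Measure U) × (ℝ × Measure U) => lov' z N c (troc p.2.2))
      · intro t ht
        have : ∀ p : (ℝ × Measure U) × (ℝ × Measure U),
            lov z N c (troc p.1.2) t = ∑ i ∈ Finset.range (N c.1),
              (troc p.1.2 (piece z c.1 i) - rowS N c i) * (troc p.1.2 (piece z c.1 i))⁻¹ *
                troc p.1.2 (t ∩ piece z c.1 i) :=
          fun p => lov_apply z N c (troc p.1.2) ht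
        simp_rw [this]
        apply Finset.measurable_sum
        intro i _
        apply Measurable.mul
        · apply Measurable.mul
          · exact (((measurable_troc_eval (measurableSet_piece z c.1 i)).comp
              (measurable_snd.comp measurable_fst)).sub measurable_const)
          · exact ((measurable_troc_eval (measurableSet_piece z c.1 i)).comp
              (measurable_snd.comp measurable_fst)).inv
        · exact (measurable_troc_eval (ht.inter (measurableSet_piece z c.1 i))).comp
            (measurable_snd.comp measurable_fst)
      · intro t ht
        have : ∀ p : (ℝ × Measure U) × (ℝ × Measure U),
            lov' z N c (troc p.2.2) t = ∑ j ∈ Finset.range (N c.1),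
              (troc p.2.2 (piece z c.1 j) - colS N c j) * (troc p.2.2 (piece z c.1 j))⁻¹ *
                troc p.2.2 (t ∩ piece z c.1 j) :=
          fun p => lov'_apply z N c (troc p.2.2) ht
        simp_rw [this]
        apply Finset.measurable_sum
        intro j _
        apply Measurable.mul
        · apply Measurable.mul
          · exact (((measurable_troc_eval (measurableSet_piece z c.1 j)).comp
              (measurable_snd.comp measurable_snd)).sub measurable_const)
          · exact ((measurable_troc_eval (measurableSet_piece z c.1 j)).comp
              (measurable_snd.comp measurable_snd)).inv
        · exact (measurable_troc_eval (ht.inter (measurableSet_piece z c.1 j))).comp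
            (measurable_snd.comp measurable_snd)
      · exact fun p => le_trans (lov_mass_le_mass z N c _) (troc_mass_le _)
      · exact fun p => le_trans (lov'_mass_le_mass z N c _) (troc_mass_le _)
      · exact hs
  have heq : (fun p : (ℝ × Measure U) × (ℝ × Measure U) => gamK z N c p s)
      = fun p => if AdmFull z N c p then gam z N c (troc p.1.2) (troc p.2.2) s else 0 := by
    funext p
    rw [gamK]
    split <;> simp
  rw [heq]
  exact Measurable.ite (measurableSet_AdmFull z N c) hmain measurable_const

variable (e : ℕ → Cand) (εk : ℝ≥0∞)

def goodk (k : ℕ) (p : (ℝ × Measure U) × (ℝ × Measure U)) : Prop :=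
  gfun z N D (e k) (p.1.2, p.2.2) < Gfun z N D (p.1.2, p.2.2) + εk

open Classical in
def KK (p : (ℝ × Measure U) × (ℝ × Measure U)) : Measure (U × U) :=
  if h : ∃ k, goodk z N D e εk k p then gamK z N (e (Nat.find h)) p else 0

lemma measurableSet_goodk (k : ℕ) :
    MeasurableSet {p : (ℝ × Measure U) × (ℝ × Measure U) | goodk z N D e εk k p} := by
  apply measurableSet_lt
  · exact (measurable_gfun z N D (e k)).comp measurable_pairproj
  · exact (((measurable_Gfun z N D).comp measurable_pairproj).add measurable_const)

lemma measurable_KK_eval {s : Set (U × U)} (hs : MeasurableSet s) :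
    Measurable (fun p => KK z N D e εk p s) := by
  classical
  set E : ℕ → Set ((ℝ × Measure U) × (ℝ × Measure U)) := fun k =>
    {p | goodk z N D e εk k p} ∩
      ⋂ j ∈ {j : ℕ | j < k}, {p | goodk z N D e εk j p}ᶜ with hEdef
  have hmemE : ∀ (k : ℕ) (p : (ℝ × Measure U) × (ℝ × Measure U)),
      p ∈ E k ↔ (goodk z N D e εk k p ∧ ∀ j < k, ¬ goodk z N D e εk j p) := by
    intro k p
    simp [hEdef]
  have hE : ∀ k, MeasurableSet (E k) :=
    fun k => (measurableSet_goodk z N D e εk k).inter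
      (MeasurableSet.biInter (Set.to_countable _)
        fun j _ => (measurableSet_goodk z N D e εk j).compl)
  have hfun : (fun p => KK z N D e εk p s)
      = fun p => ∑' k, (E k).indicator (fun p => gamK z N (e k) p s) p := by
    funext p
    by_cases h : ∃ k, goodk z N D e εk k p
    · rw [KK, dif_pos h]
      have hmem : p ∈ E (Nat.find h) :=
        (hmemE _ p).mpr ⟨Nat.find_spec h, fun j hj => Nat.find_min h hj⟩
      rw [tsum_eq_single (Nat.find h) ?_]
      · rw [Set.indicator_of_mem hmem]
      · intro k hk
        have hnot : p ∉ E k := by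
          intro hc
          replace hc := (hmemE _ p).mp hc
          rcases lt_or_gt_of_ne hk with hlt | hgt
          · exact (Nat.find_min h hlt) hc.1
          · exact hc.2 (Nat.find h) hgt (Nat.find_spec h)
        rw [Set.indicator_of_notMem hnot]
    · rw [KK, dif_neg h]
      have hnot : ∀ k, (E k).indicator (fun p => gamK z N (e k) p s) p = 0 := by
        intro k
        apply Set.indicator_of_notMem
        intro hc
        exact h ⟨k, ((hmemE _ p).mp hc).1⟩
      simp only [hnot, tsum_zero]
      simp
  rw [hfun]
  exact Measurable.ennreal_tsum fun k =>
    Measurable.indicator (measurable_gamK_eval z N (e k) hs) (hE k)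

lemma gamK_mass_le
    (hcovN : ∀ n, Set.univ ⊆ ⋃ i ∈ Finset.range (N n), Metric.ball (z i) (del n))
    (c : Cand) (p : (ℝ × Measure U) × (ℝ × Measure U)) : gamK z N c p Set.univ ≤ 1 := by
  rw [gamK]
  split
  · rename_i h
    haveI : IsProbabilityMeasure p.1.2 := ⟨h.2.1⟩
    haveI : IsProbabilityMeasure p.2.2 := ⟨h.2.2⟩
    rw [troc_of_prob h.2.1, troc_of_prob h.2.2,
      gam_mass z N c _ _ h.1 (hcovN c.1)]
  · simp

lemma KK_mass_le
    (hcovN : ∀ n, Set.univ ⊆ ⋃ i ∈ Finset.range (N n), Metric.ball (z i) (del n))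
    (p : (ℝ × Measure U) × (ℝ × Measure U)) : KK z N D e εk p Set.univ ≤ 1 := by
  rw [KK]
  split
  · exact gamK_mass_le z N hcovN _ p
  · simp

lemma KK_spec
    (hcovN : ∀ n, Set.univ ⊆ ⋃ i ∈ Finset.range (N n), Metric.ball (z i) (del n))
    (hD0 : 0 ≤ D) (hDd : ∀ u v : U, dist u v ≤ D)
    (he : Function.Surjective e) (hεk0 : εk ≠ 0) (hεktop : εk ≠ ⊤)
    (p : (ℝ × Measure U) × (ℝ × Measure U))
    (h1 : p.1.2 Set.univ = 1) (h2 : p.2.2 Set.univ = 1) :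
    ∃ c : Cand, Adm z N c p.1.2 p.2.2 ∧
      KK z N D e εk p = gam z N c p.1.2 p.2.2 ∧
      Vval z N D c ≤ Gfun z N D (p.1.2, p.2.2) + εk := by
  classical
  haveI : IsProbabilityMeasure p.1.2 := ⟨h1⟩
  haveI : IsProbabilityMeasure p.2.2 := ⟨h2⟩
  have hG : Gfun z N D (p.1.2, p.2.2) ≠ ⊤ := Gfun_ne_top z N D p.1.2 p.2.2 hcovN hD0 hDd
  have hlt : Gfun z N D (p.1.2, p.2.2) < Gfun z N D (p.1.2, p.2.2) + εk :=
    ENNReal.lt_add_right hG hεk0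
  have hlt' : (⨅ c : Cand, gfun z N D c (p.1.2, p.2.2))
      < Gfun z N D (p.1.2, p.2.2) + εk := hlt
  have hex : ∃ k, goodk z N D e εk k p := by
    obtain ⟨c, hc⟩ := iInf_lt_iff.mp hlt'
    obtain ⟨k, rfl⟩ := he c
    exact ⟨k, hc⟩
  have hk₀ := Nat.find_spec hex
  have hne : gfun z N D (e (Nat.find hex)) (p.1.2, p.2.2) ≠ ⊤ := ne_top_of_lt hk₀
  have hcond : Adm z N (e (Nat.find hex)) p.1.2 p.2.2 ∧
      p.1.2 Set.univ = 1 ∧ p.2.2 Set.univ = 1 := by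
    by_contra hc
    apply hne
    rw [gfun, if_neg hc]
  refine ⟨e (Nat.find hex), hcond.1, ?_, ?_⟩
  · rw [KK, dif_pos hex, gamK,
      if_pos (show AdmFull z N (e (Nat.find hex)) p from ⟨hcond.1, hcond.2.1, hcond.2.2⟩),
      troc_of_prob hcond.2.1, troc_of_prob hcond.2.2]
  · have := hk₀
    rw [goodk, gfun, if_pos hcond] at this
    exact le_of_lt this

/-! ### `Pext` plumbing -/

lemma measurable_sliceEval {s : Set (ℝ × U)} (hs : MeasurableSet s) :
    Measurable (fun y : ℝ × Measure U => ((Measure.dirac y.1).prod (troc y.2)) s) := by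
  apply measurable_prod_apply (μ := fun y : ℝ × Measure U => Measure.dirac y.1)
    (ν := fun y : ℝ × Measure U => troc y.2)
  · intro t ht
    have : ∀ y : ℝ × Measure U, Measure.dirac y.1 t = t.indicator (fun _ => (1:ℝ≥0∞)) y.1 :=
      fun y => Measure.dirac_apply' y.1 ht
    simp_rw [this]
    exact ((measurable_one.indicator ht)).comp measurable_fst
  · exact fun t ht => (measurable_troc_eval ht).comp measurable_snd
  · intro y
    simp
  · exact fun y => troc_mass_le y.2
  · exact hs

def g0 (y : ℝ × Measure U) : Measure (ℝ × U) := (Measure.dirac y.1).prod (troc y.2)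

lemma measurable_g0 : Measurable (g0 (U := U)) :=
  Measure.measurable_of_measurable_coe _ fun _s hs => measurable_sliceEval hs

lemma troc_sfinite (q : Measure U) : SFinite (troc q) := by
  have : IsFiniteMeasure (troc q) := ⟨lt_of_le_of_lt (troc_mass_le q) ENNReal.one_lt_top⟩
  infer_instance

lemma g0_apply (y : ℝ × Measure U) {s : Set (ℝ × U)} (hs : MeasurableSet s) :
    g0 y s = troc y.2 (Prod.mk y.1 ⁻¹' s) := by
  haveI := troc_sfinite y.2
  rw [g0, Measure.dirac_prod, Measure.map_apply measurable_prodMk_left hs]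

lemma g0_mass (y : ℝ × Measure U) : g0 y Set.univ = troc y.2 Set.univ := by
  haveI := troc_sfinite y.2
  rw [g0, ← Set.univ_prod_univ, Measure.prod_prod, measure_univ, one_mul]

lemma Pext_eq_bind (ξ : Measure (ℝ × Measure U)) (hae : ∀ᵐ p ∂ξ, p.2 Set.univ = 1) :
    Pext U ξ = ξ.bind g0 := by
  rw [Pext, Measure.bind, Measure.bind]
  congr 1
  apply Measure.map_congr
  filter_upwards [hae] with p hp
  rw [g0, troc_of_prob hp]

lemma Pext_apply (ξ : Measure (ℝ × Measure U)) (hae : ∀ᵐ p ∂ξ, p.2 Set.univ = 1)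
    {s : Set (ℝ × U)} (hs : MeasurableSet s) :
    Pext U ξ s = ∫⁻ y, g0 y s ∂ξ := by
  rw [Pext_eq_bind ξ hae]
  exact Measure.bind_apply hs measurable_g0.aemeasurable

lemma Pext_prob (ξ : Measure (ℝ × Measure U)) [IsProbabilityMeasure ξ]
    (hae : ∀ᵐ p ∂ξ, p.2 Set.univ = 1) : IsProbabilityMeasure (Pext U ξ) := by
  constructor
  rw [Pext_apply ξ hae MeasurableSet.univ]
  have : ∫⁻ y, g0 y Set.univ ∂ξ = ∫⁻ _y, 1 ∂ξ := by
    apply lintegral_congr_ae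
    filter_upwards [hae] with y hy
    rw [g0_mass, troc_of_prob hy, hy]
  rw [this, lintegral_one, measure_univ]

lemma Pext_moment (ξ : Measure (ℝ × Measure U)) [IsProbabilityMeasure ξ]
    (hae : ∀ᵐ p ∂ξ, p.2 Set.univ = 1)
    (hint : Integrable (fun y : ℝ × Measure U => y.1 ^ 2) ξ) :
    Integrable (fun p : ℝ × U => p.1 ^ 2) (Pext U ξ) := by
  constructor
  · exact (measurable_fst.pow_const 2).aestronglyMeasurable
  · rw [HasFiniteIntegral, Pext_eq_bind ξ hae]
    have hint2 : Measurable (fun p : ℝ × U => (‖p.1 ^ 2‖₊ : ℝ≥0∞)) := by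
      apply Measurable.coe_nnreal_ennreal
      exact (measurable_fst.pow_const 2).nnnorm
    change ∫⁻ p : ℝ × U, (‖p.1 ^ 2‖₊ : ℝ≥0∞) ∂(ξ.bind g0) < ∞
    rw [Measure.lintegral_bind measurable_g0.aemeasurable hint2.aemeasurable]
    have hbound : ∀ y : ℝ × Measure U,
        ∫⁻ p : ℝ × U, (‖p.1 ^ 2‖₊ : ℝ≥0∞) ∂(g0 y) ≤ (‖y.1 ^ 2‖₊ : ℝ≥0∞) := by
      intro y
      haveI := troc_sfinite y.2
      rw [g0, Measure.dirac_prod, lintegral_map hint2 measurable_prodMk_left]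
      simp only
      rw [lintegral_const]
      calc (‖y.1 ^ 2‖₊ : ℝ≥0∞) * troc y.2 Set.univ
          ≤ (‖y.1 ^ 2‖₊ : ℝ≥0∞) * 1 := mul_le_mul_right (troc_mass_le _) _
        _ = (‖y.1 ^ 2‖₊ : ℝ≥0∞) := mul_one _
    calc ∫⁻ y, ∫⁻ p : ℝ × U, (‖p.1 ^ 2‖₊ : ℝ≥0∞) ∂(g0 y) ∂ξ
        ≤ ∫⁻ y, (‖y.1 ^ 2‖₊ : ℝ≥0∞) ∂ξ := lintegral_mono hbound
      _ < ⊤ := hint.2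

/-! ### small ENNReal helpers for the main lemma -/

lemma enn_sqrt_sq (x : ℝ≥0∞) : (x ^ 2) ^ ((1:ℝ)/2) = x := by
  rw [← ENNReal.rpow_natCast x 2, ← ENNReal.rpow_mul]
  norm_num

lemma enn_le_one_add_sq (x : ℝ≥0∞) : x ≤ 1 + x ^ 2 := by
  rcases le_total x 1 with h | h
  · exact le_trans h le_self_add
  · calc x = 1 * x := (one_mul x).symm
      _ ≤ x * x := mul_le_mul_left h x
      _ = x ^ 2 := (sq x).symm
      _ ≤ 1 + x ^ 2 := le_add_self

lemma holder_generic {α : Type*} [MeasurableSpace α] (μ : Measure α) [IsProbabilityMeasure μ]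
    (f : α → ℝ≥0∞) (hfm : Measurable f) :
    ∫⁻ x, f x ∂μ ≤ (∫⁻ x, f x ^ 2 ∂μ) ^ ((1:ℝ)/2) := by
  have hpq : Real.HolderConjugate 2 2 := Real.holderConjugate_iff.mpr ⟨one_lt_two, by norm_num⟩
  have h := ENNReal.lintegral_mul_le_Lp_mul_Lq μ hpq hfm.aemeasurable
    (aemeasurable_const (b := (1:ℝ≥0∞)))
  simp only [Pi.mul_apply, mul_one, ENNReal.one_rpow, lintegral_const, measure_univ] at h
  have h2 : ∀ x, f x ^ (2:ℝ) = f x ^ 2 := fun x => by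
    rw [← ENNReal.rpow_natCast (f x) 2]; norm_num
  simp only [h2] at h
  simpa using h

lemma toReal_Gfun_le (hD0 : 0 ≤ D) (qq : Measure U × Measure U) :
    (Gfun z N D qq).toReal ≤ D ^ 2 := by
  rcases eq_or_ne (Gfun z N D qq) ⊤ with h | h
  · rw [h]
    simpa using sq_nonneg D
  · have hcond : qq.1 Set.univ = 1 ∧ qq.2 Set.univ = 1 := by
      by_contra hc
      apply h
      have hall : ∀ c : Cand, gfun z N D c qq = ⊤ := by
        intro c
        rw [gfun, if_neg]
        tauto
      rw [Gfun]
      simp [hall]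
    set c0 : Cand := ((0 : ℕ), (0 : (ℕ × ℕ) →₀ ℚ)) with hc0
    have hcc0 : ∀ i j, cc c0 i j = 0 := by
      intro i j
      rw [cc]
      simp [hc0]
    have hadm : Adm z N c0 qq.1 qq.2 := by
      constructor <;> intro i _ <;> simp [rowS, colS, hcc0]
    have hS0 : Stot N c0 = 0 := by
      rw [Stot]
      simp [rowS, hcc0]
    have hgf : gfun z N D c0 qq = ENNReal.ofReal (D ^ 2) := by
      rw [gfun, if_pos ⟨hadm, hcond.1, hcond.2⟩, Vval, hS0]
      simp [hcc0]
    have hle : Gfun z N D qq ≤ ENNReal.ofReal (D ^ 2) :=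
      le_trans (iInf_le _ c0) (le_of_eq hgf)
    calc (Gfun z N D qq).toReal ≤ (ENNReal.ofReal (D ^ 2)).toReal :=
          ENNReal.toReal_mono ENNReal.ofReal_ne_top hle
      _ = D ^ 2 := ENNReal.toReal_ofReal (sq_nonneg D)

lemma gam_mass_le (c : Cand) (q q' : Measure U)
    [IsProbabilityMeasure q] [IsProbabilityMeasure q'] (hadm : Adm z N c q q') :
    gam z N c q q' Set.univ ≤ 1 := by
  rw [← Set.univ_prod_univ, gam_apply_prod z N c q q' MeasurableSet.univ MeasurableSet.univ]
  simp only [Set.univ_inter]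
  have hsum_a : ∑ i ∈ Finset.range (N c.1), q (piece z c.1 i) ≤ 1 := by
    rw [← measure_biUnion_finset (fun i _ j _ hij => piece_disjoint z c.1 hij)
      (fun i _ => measurableSet_piece z c.1 i)]
    exact prob_le_one
  have hsum_a_ne : ∑ i ∈ Finset.range (N c.1), q (piece z c.1 i) ≠ ⊤ :=
    ne_top_of_le_ne_top one_ne_top hsum_a
  have hsum_b : ∑ j ∈ Finset.range (N c.1), q' (piece z c.1 j) ≤ 1 := by
    rw [← measure_biUnion_finset (fun i _ j _ hij => piece_disjoint z c.1 hij)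
      (fun i _ => measurableSet_piece z c.1 i)]
    exact prob_le_one
  have hsum_b_ne : ∑ j ∈ Finset.range (N c.1), q' (piece z c.1 j) ≠ ⊤ :=
    ne_top_of_le_ne_top one_ne_top hsum_b
  have hStot_le : Stot N c ≤ 1 := by
    calc Stot N c ≤ ∑ i ∈ Finset.range (N c.1), q (piece z c.1 i) :=
          Finset.sum_le_sum fun i hi => hadm.1 i hi
      _ ≤ 1 := hsum_a
  have hpart1 : ∑ i ∈ Finset.range (N c.1), ∑ j ∈ Finset.range (N c.1),
      (cc c i j * (q (piece z c.1 i))⁻¹ * (q' (piece z c.1 j))⁻¹) *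
        (q (piece z c.1 i) * q' (piece z c.1 j)) ≤ Stot N c := by
    have : ∀ i ∈ Finset.range (N c.1), ∀ j ∈ Finset.range (N c.1),
        (cc c i j * (q (piece z c.1 i))⁻¹ * (q' (piece z c.1 j))⁻¹) *
          (q (piece z c.1 i) * q' (piece z c.1 j)) ≤ cc c i j := by
      intro i _ j _
      have hre : (cc c i j * (q (piece z c.1 i))⁻¹ * (q' (piece z c.1 j))⁻¹) *
            (q (piece z c.1 i) * q' (piece z c.1 j))
          = cc c i j * (((q (piece z c.1 i))⁻¹ * q (piece z c.1 i)) *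
              ((q' (piece z c.1 j))⁻¹ * q' (piece z c.1 j))) := by ring
      rw [hre]
      calc cc c i j * (((q (piece z c.1 i))⁻¹ * q (piece z c.1 i)) *
            ((q' (piece z c.1 j))⁻¹ * q' (piece z c.1 j)))
          ≤ cc c i j * 1 := mul_le_mul_right
            (mul_le_one' (enn_inv_mul_self_le_one _) (enn_inv_mul_self_le_one _)) _
        _ = cc c i j := mul_one _
    calc ∑ i ∈ Finset.range (N c.1), ∑ j ∈ Finset.range (N c.1),
        (cc c i j * (q (piece z c.1 i))⁻¹ * (q' (piece z c.1 j))⁻¹) *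
          (q (piece z c.1 i) * q' (piece z c.1 j))
        ≤ ∑ i ∈ Finset.range (N c.1), ∑ j ∈ Finset.range (N c.1), cc c i j :=
          Finset.sum_le_sum fun i hi => Finset.sum_le_sum fun j hj => this i hi j hj
      _ = Stot N c := rfl
  have hlovU : lov z N c q Set.univ ≤ 1 - Stot N c := by
    rw [lov_apply z N c q MeasurableSet.univ]
    simp only [Set.univ_inter]
    have h1 : ∀ i ∈ Finset.range (N c.1),
        (q (piece z c.1 i) - rowS N c i) * (q (piece z c.1 i))⁻¹ * q (piece z c.1 i)
          = q (piece z c.1 i) - rowS N c i :=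
      fun i _ => enn_cancel' tsub_le_self (measure_ne_top q _)
    rw [Finset.sum_congr rfl h1, enn_sum_tsub _ _ _ hadm.1 hsum_a_ne]
    exact tsub_le_tsub_right hsum_a _
  have hlov'U : lov' z N c q' Set.univ ≤ 1 - Stot N c := by
    rw [lov'_apply z N c q' MeasurableSet.univ]
    simp only [Set.univ_inter]
    have h1 : ∀ j ∈ Finset.range (N c.1),
        (q' (piece z c.1 j) - colS N c j) * (q' (piece z c.1 j))⁻¹ * q' (piece z c.1 j)
          = q' (piece z c.1 j) - colS N c j :=
      fun j _ => enn_cancel' tsub_le_self (measure_ne_top q' _)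
    rw [Finset.sum_congr rfl h1, enn_sum_tsub _ _ _ hadm.2 hsum_b_ne, Stot_eq_col]
    exact tsub_le_tsub_right hsum_b _
  have hleft : (1 - Stot N c)⁻¹ * (lov z N c q Set.univ * lov' z N c q' Set.univ)
      ≤ 1 - Stot N c := by
    calc (1 - Stot N c)⁻¹ * (lov z N c q Set.univ * lov' z N c q' Set.univ)
        ≤ (1 - Stot N c)⁻¹ * ((1 - Stot N c) * (1 - Stot N c)) :=
          mul_le_mul_right (mul_le_mul' hlovU hlov'U) _
      _ = ((1 - Stot N c)⁻¹ * (1 - Stot N c)) * (1 - Stot N c) := by ring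
      _ ≤ 1 * (1 - Stot N c) := mul_le_mul_left (enn_inv_mul_self_le_one _) _
      _ = 1 - Stot N c := one_mul _
  calc _ ≤ Stot N c + (1 - Stot N c) := add_le_add hpart1 hleft
    _ = 1 := add_tsub_cancel_of_le hStot_le

lemma gamK_mass_le' (c : Cand) (p : (ℝ × Measure U) × (ℝ × Measure U)) :
    gamK z N c p Set.univ ≤ 1 := by
  rw [gamK]
  split
  · rename_i h
    haveI : IsProbabilityMeasure p.1.2 := ⟨h.2.1⟩
    haveI : IsProbabilityMeasure p.2.2 := ⟨h.2.2⟩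
    rw [troc_of_prob h.2.1, troc_of_prob h.2.2]
    exact gam_mass_le z N c _ _ h.1
  · simp

lemma KK_mass_le' (p : (ℝ × Measure U) × (ℝ × Measure U)) :
    KK z N D e εk p Set.univ ≤ 1 := by
  rw [KK]
  split
  · exact gamK_mass_le' z N _ p
  · simp

noncomputable def Kq : ProbabilityTheory.Kernel ((ℝ × Measure U) × (ℝ × Measure U)) (U × U) :=
  ⟨KK z N D e εk, Measure.measurable_of_measurable_coe _
    fun _s hs => measurable_KK_eval z N D e εk hs⟩

lemma Kq_apply (p : (ℝ × Measure U) × (ℝ × Measure U)) :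
    Kq z N D e εk p = KK z N D e εk p := rfl

instance Kq_finite : ProbabilityTheory.IsFiniteKernel (Kq z N D e εk) :=
  ⟨⟨1, ENNReal.one_lt_top, fun p => KK_mass_le' z N D e εk p⟩⟩

def Phi : ((ℝ × Measure U) × (ℝ × Measure U)) × (U × U) → (ℝ × U) × (ℝ × U) :=
  fun w => ((w.1.1.1, w.2.1), (w.1.2.1, w.2.2))

lemma measurable_Phi : Measurable (Phi (U := U)) :=
  ((measurable_fst.fst.fst.prodMk measurable_snd.fst).prodMk
    (measurable_fst.snd.fst.prodMk measurable_snd.snd))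

lemma sigma_fst
    (hcovN : ∀ n, Set.univ ⊆ ⋃ i ∈ Finset.range (N n), Metric.ball (z i) (del n))
    (hD0 : 0 ≤ D) (hDd : ∀ u v : U, dist u v ≤ D)
    (he : Function.Surjective e) (hεk0 : εk ≠ 0) (hεktop : εk ≠ ⊤)
    (π : Measure ((ℝ × Measure U) × (ℝ × Measure U))) [IsProbabilityMeasure π]
    (ξ : Measure (ℝ × Measure U)) (hfst : π.map Prod.fst = ξ)
    (hae : ∀ᵐ p ∂ξ, p.2 Set.univ = 1)
    (hae1 : ∀ᵐ pq ∂π, pq.1.2 Set.univ = 1) (hae2 : ∀ᵐ pq ∂π, pq.2.2 Set.univ = 1) :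
    ((π.compProd (Kq z N D e εk)).map (Phi (U := U))).map Prod.fst = Pext U ξ := by
  refine Measure.ext fun s hs => ?_
  rw [Measure.map_apply measurable_fst hs,
    Measure.map_apply measurable_Phi (measurable_fst hs),
    Measure.compProd_apply (measurable_Phi (measurable_fst hs))]
  have hsec : ∀ pq : (ℝ × Measure U) × (ℝ × Measure U),
      (Prod.mk pq ⁻¹' (Phi (U := U) ⁻¹' (Prod.fst ⁻¹' s)))
        = (Prod.mk pq.1.1 ⁻¹' s) ×ˢ (Set.univ : Set U) := by
    intro pq
    ext uv
    simp [Phi, Set.mem_prod]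
  have haeval : ∀ᵐ pq ∂π,
      (Kq z N D e εk) pq (Prod.mk pq ⁻¹' (Phi (U := U) ⁻¹' (Prod.fst ⁻¹' s)))
        = troc pq.1.2 (Prod.mk pq.1.1 ⁻¹' s) := by
    filter_upwards [hae1, hae2] with pq h1 h2
    haveI : IsProbabilityMeasure pq.1.2 := ⟨h1⟩
    haveI : IsProbabilityMeasure pq.2.2 := ⟨h2⟩
    obtain ⟨c, hadm, hKeq, -⟩ := KK_spec z N D e εk hcovN hD0 hDd he hεk0 hεktop pq h1 h2
    rw [hsec pq, Kq_apply, hKeq,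
      gam_fst z N c _ _ hadm (hcovN c.1) (measurable_prodMk_left hs),
      troc_of_prob h1]
  calc ∫⁻ pq, (Kq z N D e εk) pq (Prod.mk pq ⁻¹' (Phi (U := U) ⁻¹' (Prod.fst ⁻¹' s))) ∂π
      = ∫⁻ pq, troc pq.1.2 (Prod.mk pq.1.1 ⁻¹' s) ∂π := lintegral_congr_ae haeval
    _ = ∫⁻ y : ℝ × Measure U, troc y.2 (Prod.mk y.1 ⁻¹' s) ∂(π.map Prod.fst) := by
        have hm : Measurable fun y : ℝ × Measure U => troc y.2 (Prod.mk y.1 ⁻¹' s) := by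
          have heq : (fun y : ℝ × Measure U => troc y.2 (Prod.mk y.1 ⁻¹' s))
              = fun y => g0 y s := funext fun y => (g0_apply y hs).symm
          rw [heq]
          exact measurable_sliceEval hs
        rw [lintegral_map hm measurable_fst]
    _ = Pext U ξ s := by
        rw [hfst, Pext_apply ξ hae hs]
        exact lintegral_congr fun y => (g0_apply y hs).symm

lemma sigma_snd
    (hcovN : ∀ n, Set.univ ⊆ ⋃ i ∈ Finset.range (N n), Metric.ball (z i) (del n))
    (hD0 : 0 ≤ D) (hDd : ∀ u v : U, dist u v ≤ D)
    (he : Function.Surjective e) (hεk0 : εk ≠ 0) (hεktop : εk ≠ ⊤)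
    (π : Measure ((ℝ × Measure U) × (ℝ × Measure U))) [IsProbabilityMeasure π]
    (ξ' : Measure (ℝ × Measure U)) (hsnd : π.map Prod.snd = ξ')
    (hae' : ∀ᵐ p ∂ξ', p.2 Set.univ = 1)
    (hae1 : ∀ᵐ pq ∂π, pq.1.2 Set.univ = 1) (hae2 : ∀ᵐ pq ∂π, pq.2.2 Set.univ = 1) :
    ((π.compProd (Kq z N D e εk)).map (Phi (U := U))).map Prod.snd = Pext U ξ' := by
  refine Measure.ext fun s hs => ?_
  rw [Measure.map_apply measurable_snd hs,
    Measure.map_apply measurable_Phi (measurable_snd hs),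
    Measure.compProd_apply (measurable_Phi (measurable_snd hs))]
  have hsec : ∀ pq : (ℝ × Measure U) × (ℝ × Measure U),
      (Prod.mk pq ⁻¹' (Phi (U := U) ⁻¹' (Prod.snd ⁻¹' s)))
        = (Set.univ : Set U) ×ˢ (Prod.mk pq.2.1 ⁻¹' s) := by
    intro pq
    ext uv
    simp [Phi, Set.mem_prod]
  have haeval : ∀ᵐ pq ∂π,
      (Kq z N D e εk) pq (Prod.mk pq ⁻¹' (Phi (U := U) ⁻¹' (Prod.snd ⁻¹' s)))
        = troc pq.2.2 (Prod.mk pq.2.1 ⁻¹' s) := by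
    filter_upwards [hae1, hae2] with pq h1 h2
    haveI : IsProbabilityMeasure pq.1.2 := ⟨h1⟩
    haveI : IsProbabilityMeasure pq.2.2 := ⟨h2⟩
    obtain ⟨c, hadm, hKeq, -⟩ := KK_spec z N D e εk hcovN hD0 hDd he hεk0 hεktop pq h1 h2
    rw [hsec pq, Kq_apply, hKeq,
      gam_snd z N c _ _ hadm (hcovN c.1) (measurable_prodMk_left hs),
      troc_of_prob h2]
  calc ∫⁻ pq, (Kq z N D e εk) pq (Prod.mk pq ⁻¹' (Phi (U := U) ⁻¹' (Prod.snd ⁻¹' s))) ∂π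
      = ∫⁻ pq, troc pq.2.2 (Prod.mk pq.2.1 ⁻¹' s) ∂π := lintegral_congr_ae haeval
    _ = ∫⁻ y : ℝ × Measure U, troc y.2 (Prod.mk y.1 ⁻¹' s) ∂(π.map Prod.snd) := by
        have hm : Measurable fun y : ℝ × Measure U => troc y.2 (Prod.mk y.1 ⁻¹' s) := by
          have heq : (fun y : ℝ × Measure U => troc y.2 (Prod.mk y.1 ⁻¹' s))
              = fun y => g0 y s := funext fun y => (g0_apply y hs).symm
          rw [heq]
          exact measurable_sliceEval hs
        rw [lintegral_map hm measurable_snd]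
    _ = Pext U ξ' s := by
        rw [hsnd, Pext_apply ξ' hae' hs]
        exact lintegral_congr fun y => (g0_apply y hs).symm

set_option maxHeartbeats 4000000 in
lemma W2sq_Pext_le (hU : IsCompact U) [Nonempty U]
    (ξ ξ' : Measure (ℝ × Measure U))
    [IsProbabilityMeasure ξ] [IsProbabilityMeasure ξ']
    (hae : ∀ᵐ p ∂ξ, p.2 Set.univ = 1) (hae' : ∀ᵐ p ∂ξ', p.2 Set.univ = 1)
    (hint : Integrable (fun p : ℝ × Measure U => p.1 ^ 2) ξ)
    (hint' : Integrable (fun p : ℝ × Measure U => p.1 ^ 2) ξ') :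
    W2sq (fun (p q : ℝ × U) => (|p.1 - q.1| + dist p.2 q.2) ^ 2) (Pext U ξ) (Pext U ξ')
      ≤ W2sq (fun (p q : ℝ × Measure U) =>
          (|p.1 - q.1| + W2 (fun (uu vv : U) => dist uu vv ^ 2) p.2 q.2) ^ 2) ξ ξ' := by
  classical
  haveI : CompactSpace U := isCompact_iff_compactSpace.mp hU
  set z : ℕ → U := TopologicalSpace.denseSeq U with hzdef
  have hzd : DenseRange z := TopologicalSpace.denseRange_denseSeq U
  have hcovex : ∀ n : ℕ, ∃ K : ℕ,
      Set.univ ⊆ ⋃ i ∈ Finset.range K, Metric.ball (z i) (del n) := by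
    intro n
    have hcover : (Set.univ : Set U) ⊆ ⋃ i : ℕ, Metric.ball (z i) (del n) := by
      intro x _
      obtain ⟨i, hi⟩ := hzd.exists_dist_lt x (del_pos n)
      exact Set.mem_iUnion.mpr ⟨i, Metric.mem_ball.mpr hi⟩
    obtain ⟨t, ht⟩ := isCompact_univ.elim_finite_subcover _
      (fun i : ℕ => Metric.isOpen_ball) hcover
    refine ⟨(t.sup id) + 1, ?_⟩
    intro x hx
    obtain ⟨i, hi, hxi⟩ := Set.mem_iUnion₂.mp (ht hx)
    exact Set.mem_iUnion₂.mpr ⟨i, Finset.mem_range.mpr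
      (Nat.lt_succ_of_le (Finset.le_sup (f := id) hi)), hxi⟩
  choose N hcovN using hcovex
  set D : ℝ := Metric.diam U with hDdef
  have hD0 : 0 ≤ D := Metric.diam_nonneg
  have hDd : ∀ u v : U, dist u v ≤ D := by
    intro u v
    rw [Subtype.dist_eq]
    exact Metric.dist_le_diam_of_mem hU.isBounded u.2 v.2
  obtain ⟨e, he⟩ := exists_surjective_nat Cand
  -- bddBelow of LHS
  have hbdd : BddBelow {r : ℝ | ∃ σ' : Measure ((ℝ × U) × (ℝ × U)),
      σ'.map Prod.fst = Pext U ξ ∧ σ'.map Prod.snd = Pext U ξ' ∧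
      r = ∫ pp, (fun (p q : ℝ × U) => (|p.1 - q.1| + dist p.2 q.2) ^ 2) pp.1 pp.2 ∂σ'} := by
    refine ⟨0, ?_⟩
    rintro r ⟨σ', -, -, rfl⟩
    exact integral_nonneg fun pp => sq_nonneg _
  have hctm : Measurable (fun pp : (ℝ × U) × (ℝ × U) =>
      (|pp.1.1 - pp.2.1| + dist pp.1.2 pp.2.2) ^ 2) :=
    (((measurable_fst.fst.sub measurable_snd.fst).abs).add
      (measurable_fst.snd.dist measurable_snd.snd)).pow_const 2
  apply le_csInf
  · exact ⟨_, ξ.prod ξ', by rw [Measure.map_fst_prod, measure_univ, one_smul],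
      by rw [Measure.map_snd_prod, measure_univ, one_smul], rfl⟩
  rintro r ⟨π, hfst, hsnd, rfl⟩
  haveI hπ : IsProbabilityMeasure π := by
    constructor
    have h1 : (π.map Prod.fst) Set.univ = ξ Set.univ := by rw [hfst]
    rw [Measure.map_apply measurable_fst MeasurableSet.univ, Set.preimage_univ] at h1
    rw [h1, measure_univ]
  have hprob1meas : MeasurableSet {y : ℝ × Measure U | y.2 Set.univ = 1} :=
    ((Measure.measurable_coe MeasurableSet.univ).comp measurable_snd)
      (measurableSet_singleton 1)
  have hae1 : ∀ᵐ pq ∂π, pq.1.2 Set.univ = 1 := by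
    have h0 : ∀ᵐ y ∂(π.map Prod.fst), y.2 Set.univ = 1 := hfst ▸ hae
    exact (ae_map_iff measurable_fst.aemeasurable hprob1meas).mp h0
  have hae2 : ∀ᵐ pq ∂π, pq.2.2 Set.univ = 1 := by
    have h0 : ∀ᵐ y ∂(π.map Prod.snd), y.2 Set.univ = 1 := hsnd ▸ hae'
    exact (ae_map_iff measurable_snd.aemeasurable hprob1meas).mp h0
  -- measurable cost on the pair space
  set W : (ℝ × Measure U) × (ℝ × Measure U) → ℝ :=
    fun pq => Real.sqrt ((Gfun z N D (pq.1.2, pq.2.2)).toReal) with hWdef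
  have hWm : Measurable W :=
    (((measurable_Gfun z N D).comp measurable_pairproj).ennreal_toReal).sqrt
  have hW0 : ∀ pq, 0 ≤ W pq := fun pq => Real.sqrt_nonneg _
  have hWD : ∀ pq, W pq ≤ D := by
    intro pq
    have h := toReal_Gfun_le z N D hD0 (pq.1.2, pq.2.2)
    calc W pq ≤ Real.sqrt (D ^ 2) := Real.sqrt_le_sqrt h
      _ = D := Real.sqrt_sq hD0
  set cM : (ℝ × Measure U) × (ℝ × Measure U) → ℝ :=
    fun pq => (|pq.1.1 - pq.2.1| + W pq) ^ 2 with hcMdef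
  have hcMm : Measurable cM :=
    (((measurable_fst.fst.sub measurable_snd.fst).abs).add hWm).pow_const 2
  have hcongr : (fun pq : (ℝ × Measure U) × (ℝ × Measure U) =>
      (fun (p q : ℝ × Measure U) =>
        (|p.1 - q.1| + W2 (fun (uu vv : U) => dist uu vv ^ 2) p.2 q.2) ^ 2) pq.1 pq.2)
      =ᵐ[π] cM := by
    filter_upwards [hae1, hae2] with pq h1 h2
    haveI : IsProbabilityMeasure pq.1.2 := ⟨h1⟩
    haveI : IsProbabilityMeasure pq.2.2 := ⟨h2⟩
    show (|pq.1.1 - pq.2.1|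
        + W2 (fun (uu vv : U) => dist uu vv ^ 2) pq.1.2 pq.2.2) ^ 2 = cM pq
    rw [W2_inner_eq_sqrt_Gfun z N D pq.1.2 pq.2.2 hcovN hD0 hDd]
  -- integrability
  have hint1 : Integrable (fun pq : (ℝ × Measure U) × (ℝ × Measure U) => pq.1.1 ^ 2) π := by
    have h := (integrable_map_measure
      ((measurable_fst.pow_const 2).aestronglyMeasurable) measurable_fst.aemeasurable).mp
      (by rw [hfst]; exact hint)
    exact h
  have hint2 : Integrable (fun pq : (ℝ × Measure U) × (ℝ × Measure U) => pq.2.1 ^ 2) π := by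
    have h := (integrable_map_measure
      ((measurable_fst.pow_const 2).aestronglyMeasurable) measurable_snd.aemeasurable).mp
      (by rw [hsnd]; exact hint')
    exact h
  have hgint : Integrable (fun pq : (ℝ × Measure U) × (ℝ × Measure U) =>
      4 * pq.1.1 ^ 2 + 4 * pq.2.1 ^ 2 + 2 * D ^ 2) π :=
    (((hint1.const_mul 4).add (hint2.const_mul 4)).add (integrable_const _))
  have hcMint : Integrable cM π := by
    refine Integrable.mono' hgint hcMm.aestronglyMeasurable (ae_of_all _ fun pq => ?_)
    rw [Real.norm_eq_abs, abs_of_nonneg (sq_nonneg _)]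
    show (|pq.1.1 - pq.2.1| + W pq) ^ 2 ≤ 4 * pq.1.1 ^ 2 + 4 * pq.2.1 ^ 2 + 2 * D ^ 2
    have h1 := hW0 pq
    have h2 := hWD pq
    have h3 : W pq ^ 2 ≤ D ^ 2 := pow_le_pow_left₀ h1 h2 2
    have h4 : |pq.1.1 - pq.2.1| ^ 2 = (pq.1.1 - pq.2.1) ^ 2 := sq_abs _
    nlinarith [sq_nonneg (|pq.1.1 - pq.2.1| - W pq), sq_nonneg (pq.1.1 + pq.2.1),
      abs_nonneg (pq.1.1 - pq.2.1), sq_nonneg (pq.1.1 - pq.2.1)]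
  have hrval : ∫ pq, (fun (p q : ℝ × Measure U) =>
      (|p.1 - q.1| + W2 (fun (uu vv : U) => dist uu vv ^ 2) p.2 q.2) ^ 2) pq.1 pq.2 ∂π
      = (∫⁻ pq, ENNReal.ofReal (cM pq) ∂π).toReal := by
    rw [integral_congr_ae hcongr]
    exact integral_eq_lintegral_of_nonneg_ae (ae_of_all _ fun pq => sq_nonneg _)
      hcMm.aestronglyMeasurable
  set Rπ := ∫⁻ pq, ENNReal.ofReal (cM pq) ∂π with hRπdef
  have hRfin : Rπ ≠ ⊤ := by
    have h1 : Rπ ≤ ∫⁻ pq, (‖cM pq‖₊ : ℝ≥0∞) ∂π :=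
      lintegral_mono fun pq => Real.ofReal_le_enorm _
    exact ne_of_lt (lt_of_le_of_lt h1 hcMint.2)
  rw [hrval]
  apply _root_.le_of_forall_pos_le_add
  intro ε hε
  set C := Rπ.toReal with hCdef
  have hC0 : 0 ≤ C := ENNReal.toReal_nonneg
  set ε₂ : ℝ := min 1 (ε / (2 * (1 + C) + 1)) with hε₂def
  have hε₂pos : 0 < ε₂ := lt_min one_pos (by positivity)
  have hε₂1 : ε₂ ≤ 1 := min_le_left _ _
  have hε₂le : ε₂ ≤ ε / (2 * (1 + C) + 1) := min_le_right _ _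
  set s : ℝ≥0∞ := ENNReal.ofReal ε₂ with hsdef
  set εk : ℝ≥0∞ := ENNReal.ofReal (ε₂ ^ 2) with hεkdef
  have hεk0 : εk ≠ 0 := ne_of_gt (ENNReal.ofReal_pos.mpr (by positivity))
  have hεktop : εk ≠ ⊤ := ENNReal.ofReal_ne_top
  have hεksq : εk = s ^ 2 := by
    rw [hεkdef, hsdef]
    exact ENNReal.ofReal_pow hε₂pos.le 2
  set σ : Measure ((ℝ × U) × (ℝ × U)) :=
    ((π.compProd (Kq z N D e εk)).map (Phi (U := U))) with hσdef
  have hσfst : σ.map Prod.fst = Pext U ξ :=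
    sigma_fst z N D e εk hcovN hD0 hDd he hεk0 hεktop π ξ hfst hae hae1 hae2
  have hσsnd : σ.map Prod.snd = Pext U ξ' :=
    sigma_snd z N D e εk hcovN hD0 hDd he hεk0 hεktop π ξ' hsnd hae' hae1 hae2
  -- cost estimate
  set X : (ℝ × Measure U) × (ℝ × Measure U) → ℝ≥0∞ :=
    fun pq => ENNReal.ofReal (|pq.1.1 - pq.2.1| + W pq) with hXdef
  have hXm : Measurable X :=
    (((measurable_fst.fst.sub measurable_snd.fst).abs).add hWm).ennreal_ofReal
  have hXsq : ∀ pq, X pq ^ 2 = ENNReal.ofReal (cM pq) := by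
    intro pq
    show (ENNReal.ofReal (|pq.1.1 - pq.2.1| + W pq)) ^ 2
        = ENNReal.ofReal ((|pq.1.1 - pq.2.1| + W pq) ^ 2)
    rw [← ENNReal.ofReal_pow (by positivity)]
  have hpoint : ∀ᵐ pq ∂π, ∫⁻ uv, ENNReal.ofReal
      ((|pq.1.1 - pq.2.1| + dist uv.1 uv.2) ^ 2) ∂((Kq z N D e εk) pq)
        ≤ X pq ^ 2 + 2 * s * X pq + s ^ 2 := by
    filter_upwards [hae1, hae2] with pq h1 h2
    haveI : IsProbabilityMeasure pq.1.2 := ⟨h1⟩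
    haveI : IsProbabilityMeasure pq.2.2 := ⟨h2⟩
    obtain ⟨c, hadm, hKeq, hV⟩ := KK_spec z N D e εk hcovN hD0 hDd he hεk0 hεktop pq h1 h2
    haveI : IsProbabilityMeasure (gam z N c pq.1.2 pq.2.2) :=
      ⟨gam_mass z N c _ _ hadm (hcovN c.1)⟩
    rw [Kq_apply, hKeq]
    set A := ENNReal.ofReal |pq.1.1 - pq.2.1| with hA
    set dd : U × U → ℝ≥0∞ := fun uv => ENNReal.ofReal (dist uv.1 uv.2) with hdd
    have hddm : Measurable dd := (measurable_fst.dist measurable_snd).ennreal_ofReal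
    have hinteq : ∀ uv : U × U,
        ENNReal.ofReal ((|pq.1.1 - pq.2.1| + dist uv.1 uv.2) ^ 2)
          = A ^ 2 + 2 * A * dd uv + dd uv ^ 2 := by
      intro uv
      rw [ENNReal.ofReal_pow (by positivity),
        ENNReal.ofReal_add (abs_nonneg _) dist_nonneg, add_sq]
    rw [lintegral_congr hinteq]
    set μc := gam z N c pq.1.2 pq.2.2 with hμc
    set S := ∫⁻ uv, dd uv ^ 2 ∂μc with hSdef
    set oW := ENNReal.ofReal (W pq) with hoW
    have hScost : S ≤ oW ^ 2 + s ^ 2 := by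
      have h3 : S ≤ Vval z N D c := by
        have hgc := gam_cost z N D c pq.1.2 pq.2.2 hadm (hcovN c.1) hDd
        calc S = ∫⁻ x, ENNReal.ofReal (dist x.1 x.2 ^ 2) ∂μc := by
              refine lintegral_congr fun uv => ?_
              rw [hdd]
              rw [← ENNReal.ofReal_pow dist_nonneg]
          _ ≤ Vval z N D c := hgc
      have h4 : Gfun z N D (pq.1.2, pq.2.2) = oW ^ 2 := by
        have h5 := W2_inner_eq_sqrt_Gfun z N D pq.1.2 pq.2.2 hcovN hD0 hDd
        rw [Gfun_eq_sq z N D pq.1.2 pq.2.2 hcovN hD0 hDd, h5, hoW,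
          ← ENNReal.ofReal_pow (hW0 pq)]
      calc S ≤ Vval z N D c := h3
        _ ≤ Gfun z N D (pq.1.2, pq.2.2) + εk := hV
        _ = oW ^ 2 + s ^ 2 := by rw [h4, hεksq]
    have hL : ∫⁻ uv, dd uv ∂μc ≤ oW + s := by
      calc ∫⁻ uv, dd uv ∂μc ≤ (∫⁻ uv, dd uv ^ 2 ∂μc) ^ ((1:ℝ)/2) :=
            holder_generic μc dd hddm
        _ ≤ (oW ^ 2 + s ^ 2) ^ ((1:ℝ)/2) :=
            ENNReal.rpow_le_rpow hScost (by norm_num)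
        _ ≤ (oW ^ 2) ^ ((1:ℝ)/2) + (s ^ 2) ^ ((1:ℝ)/2) :=
            ENNReal.rpow_add_le_add_rpow _ _ (by norm_num) (by norm_num)
        _ = oW + s := by rw [enn_sqrt_sq, enn_sqrt_sq]
    have hXeq : X pq = A + oW := by
      show ENNReal.ofReal (|pq.1.1 - pq.2.1| + W pq) = A + oW
      rw [ENNReal.ofReal_add (abs_nonneg _) (hW0 pq), hA, hoW]
    calc ∫⁻ uv, (A ^ 2 + 2 * A * dd uv + dd uv ^ 2) ∂μc
        = (∫⁻ _uv, A ^ 2 ∂μc + ∫⁻ uv, 2 * A * dd uv ∂μc) + S := by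
          rw [lintegral_add_right _ (hddm.pow_const 2),
            lintegral_add_left measurable_const]
      _ = (A ^ 2 + (2 * A) * ∫⁻ uv, dd uv ∂μc) + S := by
          rw [lintegral_const, measure_univ, mul_one, lintegral_const_mul _ hddm]
      _ ≤ (A ^ 2 + (2 * A) * (oW + s)) + (oW ^ 2 + s ^ 2) :=
          add_le_add (add_le_add_right (mul_le_mul_right hL _) _) hScost
      _ ≤ X pq ^ 2 + 2 * s * X pq + s ^ 2 := by
          rw [hXeq]
          have hring : (A + oW) ^ 2 + 2 * s * (A + oW) + s ^ 2
              = ((A ^ 2 + (2 * A) * (oW + s)) + (oW ^ 2 + s ^ 2)) + 2 * (oW * s) := by ring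
          rw [hring]
          exact self_le_add_right _ _
  have hmeasw : Measurable (fun w : ((ℝ × Measure U) × (ℝ × Measure U)) × (U × U) =>
      ENNReal.ofReal ((|w.1.1.1 - w.1.2.1| + dist w.2.1 w.2.2) ^ 2)) :=
    ((((measurable_fst.fst.fst.sub measurable_fst.snd.fst).abs).add
      (measurable_snd.fst.dist measurable_snd.snd)).pow_const 2).ennreal_ofReal
  have hcost : ∫⁻ pp, ENNReal.ofReal ((|pp.1.1 - pp.2.1| + dist pp.1.2 pp.2.2) ^ 2) ∂σ
      ≤ Rπ + (2 * s * (1 + Rπ) + s ^ 2) := by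
    have hrw : ∫⁻ pp, ENNReal.ofReal ((|pp.1.1 - pp.2.1| + dist pp.1.2 pp.2.2) ^ 2) ∂σ
        = ∫⁻ pq, ∫⁻ uv, ENNReal.ofReal
            ((|pq.1.1 - pq.2.1| + dist uv.1 uv.2) ^ 2) ∂((Kq z N D e εk) pq) ∂π := by
      rw [hσdef, lintegral_map hctm.ennreal_ofReal measurable_Phi]
      have hee : ∀ w : ((ℝ × Measure U) × (ℝ × Measure U)) × (U × U),
          ENNReal.ofReal ((|(Phi (U := U) w).1.1 - (Phi (U := U) w).2.1|
            + dist (Phi (U := U) w).1.2 (Phi (U := U) w).2.2) ^ 2)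
          = ENNReal.ofReal ((|w.1.1.1 - w.1.2.1| + dist w.2.1 w.2.2) ^ 2) := fun w => rfl
      rw [lintegral_congr hee, Measure.lintegral_compProd hmeasw]
    have hXint : ∫⁻ pq, X pq ∂π ≤ 1 + Rπ := by
      calc ∫⁻ pq, X pq ∂π ≤ ∫⁻ pq, (1 + X pq ^ 2) ∂π :=
            lintegral_mono fun pq => enn_le_one_add_sq (X pq)
        _ = 1 + Rπ := by
            rw [lintegral_add_left measurable_const, lintegral_const, measure_univ, mul_one]
            congr 1
            exact lintegral_congr hXsq
    rw [hrw]
    calc ∫⁻ pq, ∫⁻ uv, ENNReal.ofReal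
          ((|pq.1.1 - pq.2.1| + dist uv.1 uv.2) ^ 2) ∂((Kq z N D e εk) pq) ∂π
        ≤ ∫⁻ pq, (X pq ^ 2 + 2 * s * X pq + s ^ 2) ∂π := lintegral_mono_ae hpoint
      _ = (Rπ + (2 * s) * ∫⁻ pq, X pq ∂π) + s ^ 2 := by
          rw [lintegral_add_right _ measurable_const,
            lintegral_add_left (hXm.pow_const 2), lintegral_const, measure_univ, mul_one,
            lintegral_const_mul _ hXm]
          congr 2
          exact lintegral_congr hXsq
      _ ≤ (Rπ + (2 * s) * (1 + Rπ)) + s ^ 2 :=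
          add_le_add_left (add_le_add_right (mul_le_mul_right hXint _) _) _
      _ = Rπ + (2 * s * (1 + Rπ) + s ^ 2) := by ring
  -- error estimate
  have hErr : 2 * s * (1 + Rπ) + s ^ 2 ≤ ENNReal.ofReal ε := by
    have h1 : (1 : ℝ≥0∞) + Rπ = ENNReal.ofReal (1 + C) := by
      rw [ENNReal.ofReal_add zero_le_one hC0, ENNReal.ofReal_one, hCdef,
        ENNReal.ofReal_toReal hRfin]
    have h2 : 2 * s * (1 + Rπ) + s ^ 2 = ENNReal.ofReal (2 * ε₂ * (1 + C) + ε₂ ^ 2) := by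
      rw [ENNReal.ofReal_add (by positivity) (by positivity), ENNReal.ofReal_pow hε₂pos.le,
        ENNReal.ofReal_mul (by positivity), ENNReal.ofReal_mul (by norm_num : (0:ℝ) ≤ 2),
        ← h1, ← hsdef]
      norm_num
    rw [h2]
    apply ENNReal.ofReal_le_ofReal
    have h3 : ε₂ * (2 * (1 + C) + 1) ≤ ε := by
      rw [← div_mul_cancel₀ ε (show (2 * (1 + C) + 1 : ℝ) ≠ 0 by positivity)]
      exact mul_le_mul_of_nonneg_right hε₂le (by positivity)
    nlinarith [hε₂pos, hε₂1]
  -- conclusion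
  set r₁ := ∫ pp, (fun (p q : ℝ × U) =>
    (|p.1 - q.1| + dist p.2 q.2) ^ 2) pp.1 pp.2 ∂σ with hr₁def
  have hmem : r₁ ∈ {r : ℝ | ∃ σ' : Measure ((ℝ × U) × (ℝ × U)),
      σ'.map Prod.fst = Pext U ξ ∧ σ'.map Prod.snd = Pext U ξ' ∧
      r = ∫ pp, (fun (p q : ℝ × U) => (|p.1 - q.1| + dist p.2 q.2) ^ 2) pp.1 pp.2 ∂σ'} :=
    ⟨σ, hσfst, hσsnd, rfl⟩
  have hr₁val : r₁ = (∫⁻ pp, ENNReal.ofReal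
      ((|pp.1.1 - pp.2.1| + dist pp.1.2 pp.2.2) ^ 2) ∂σ).toReal :=
    integral_eq_lintegral_of_nonneg_ae (ae_of_all _ fun pp => sq_nonneg _)
      hctm.aestronglyMeasurable
  have hfinal : r₁ ≤ Rπ.toReal + ε := by
    rw [hr₁val]
    calc (∫⁻ pp, ENNReal.ofReal
          ((|pp.1.1 - pp.2.1| + dist pp.1.2 pp.2.2) ^ 2) ∂σ).toReal
        ≤ (Rπ + ENNReal.ofReal ε).toReal := by
          apply ENNReal.toReal_mono (ENNReal.add_ne_top.mpr ⟨hRfin, ENNReal.ofReal_ne_top⟩)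
          exact le_trans hcost (add_le_add_right hErr Rπ)
      _ = Rπ.toReal + ε := by
          rw [ENNReal.toReal_add hRfin ENNReal.ofReal_ne_top,
            ENNReal.toReal_ofReal hε.le]
  exact le_trans (csInf_le hbdd hmem) hfinal

end Stmt8Aux
end

/-- If `b : [0,T] × ℝ × 𝒫₂(ℝ×U) × U → ℝ` is uniformly Lipschitz in
`(x, ρ)` with constant `M` (with `W_{2,ℝ×U}` for the metric `|x-x'| + |u-u'|`), then its
extension `b̃(t, x, ξ, u) = b(t, x, 𝒫(ξ), u)` is uniformly Lipschitz in `(x, ξ)` with the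
same constant `M` (with `W_{2,ℝ×𝒫(U)}` for the metric `|x-x'| + W_{2,U}(q,q')`). -/
theorem stmt8 {l : ℕ} (T : ℝ) (hT : 0 < T)
    (U : Set (EuclideanSpace ℝ (Fin l))) (hU : IsCompact U) (M : ℝ) (hM : 0 < M)
    (b : ℝ → ℝ → Measure (ℝ × U) → U → ℝ)
    (hLip : ∀ t ∈ Set.Icc (0:ℝ) T, ∀ (u : U) (x x' : ℝ) (ρ ρ' : Measure (ℝ × U)),
      IsProbabilityMeasure ρ → IsProbabilityMeasure ρ' →
      Integrable (fun p => p.1 ^ 2) ρ → Integrable (fun p => p.1 ^ 2) ρ' →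
      |b t x ρ u - b t x' ρ' u| ≤
        M * (|x - x'| +
          W2 (fun (p q : ℝ × U) => (|p.1 - q.1| + dist p.2 q.2) ^ 2) ρ ρ')) :
    ∀ t ∈ Set.Icc (0:ℝ) T, ∀ (u : U) (x x' : ℝ) (ξ ξ' : Measure (ℝ × Measure U)),
      IsProbabilityMeasure ξ → IsProbabilityMeasure ξ' →
      (∀ᵐ p ∂ξ, IsProbabilityMeasure p.2) → (∀ᵐ p ∂ξ', IsProbabilityMeasure p.2) →
      Integrable (fun p => p.1 ^ 2) ξ → Integrable (fun p => p.1 ^ 2) ξ' →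
      |b t x (Pext U ξ) u - b t x' (Pext U ξ') u| ≤
        M * (|x - x'| +
          W2 (fun (p q : ℝ × Measure U) =>
            (|p.1 - q.1| + W2 (fun (uu vv : U) => dist uu vv ^ 2) p.2 q.2) ^ 2) ξ ξ') := by
  
  intro t ht u x x' ξ ξ' hξ hξ' hae hae' hint hint'
  haveI := hξ
  haveI := hξ'
  rcases isEmpty_or_nonempty ↥U with hEmp | hNe
  · exfalso
    have h0 : ∀ p : ℝ × Measure U, ¬ IsProbabilityMeasure p.2 := by
      intro p hp
      have h1 := hp.measure_univ
      rw [Set.univ_eq_empty_iff.mpr hEmp, measure_empty] at h1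
      exact zero_ne_one h1
    have h2 : ξ {p : ℝ × Measure U | ¬ IsProbabilityMeasure p.2} = 0 := ae_iff.mp hae
    have h3 : {p : ℝ × Measure U | ¬ IsProbabilityMeasure p.2} = Set.univ :=
      Set.eq_univ_of_forall h0
    rw [h3, measure_univ] at h2
    exact one_ne_zero h2
  · have haeu : ∀ᵐ p ∂ξ, p.2 Set.univ = 1 := hae.mono fun p hp => hp.measure_univ
    have haeu' : ∀ᵐ p ∂ξ', p.2 Set.univ = 1 := hae'.mono fun p hp => hp.measure_univ
    haveI hP1 : IsProbabilityMeasure (Pext U ξ) := Stmt8Aux.Pext_prob ξ haeu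
    haveI hP2 : IsProbabilityMeasure (Pext U ξ') := Stmt8Aux.Pext_prob ξ' haeu'
    have hM1 : Integrable (fun p : ℝ × U => p.1 ^ 2) (Pext U ξ) :=
      Stmt8Aux.Pext_moment ξ haeu hint
    have hM2 : Integrable (fun p : ℝ × U => p.1 ^ 2) (Pext U ξ') :=
      Stmt8Aux.Pext_moment ξ' haeu' hint'
    have hlip := hLip t ht u x x' (Pext U ξ) (Pext U ξ') hP1 hP2 hM1 hM2
    refine le_trans hlip (mul_le_mul_of_nonneg_left (add_le_add_right ?_ _) hM.le)
    rw [W2, W2]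
    exact Real.sqrt_le_sqrt (Stmt8Aux.W2sq_Pext_le hU ξ ξ' haeu haeu' hint hint')
end

section
/- Let T > 0 and let c : [0,T] × ℝ → ℝ be continuous. For (a,y) ∈ C([0,T];ℝ)² with y(0) ≥ a(0), set x := Γ(a,y) and r := x − y, so that r is continuous, nondecreasing, and r(0) = 0. Then the reflection-cost functional (a,y) ↦ ∫_{[0,T]} c(t, x(t)) dr(t), where the integral is taken with respect to the Lebesgue–Stieltjes measure of r, is continuous on the set {(a,y) ∈ C([0,T];ℝ)² : y(0) ≥ a(0)} with respect to the product of the sup-norm topologies. In particular, if (aₙ,yₙ) → (a,y) uniformly on [0,T] with yₙ(0) ≥ aₙ(0) for all n, then ∫_{[0,T]} c(t, Γ(aₙ,yₙ)(t)) d(Γ(aₙ,yₙ) − yₙ)(t) → ∫_{[0,T]} c(t, Γ(a,y)(t)) d(Γ(a,y) − y)(t). -/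
open Set MeasureTheory Filter Topology

lemma aux_csSup_le_add {f g : ℝ → ℝ} {s : Set ℝ} (hs : s.Nonempty)
    (hbg : BddAbove (g '' s)) {ε : ℝ} (h : ∀ x ∈ s, f x ≤ g x + ε) :
    sSup (f '' s) ≤ sSup (g '' s) + ε := by
  apply csSup_le (hs.image f)
  rintro _ ⟨x, hx, rfl⟩
  exact (h x hx).trans (add_le_add_left (le_csSup hbg (mem_image_of_mem g hx)) ε)

lemma aux_sSup_dist {f g : ℝ → ℝ} {s : Set ℝ} (hs : s.Nonempty)
    (hbf : BddAbove (f '' s)) (hbg : BddAbove (g '' s)) {ε : ℝ}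
    (h : ∀ x ∈ s, |f x - g x| ≤ ε) :
    |sSup (f '' s) - sSup (g '' s)| ≤ ε := by
  rw [abs_sub_le_iff]
  constructor
  · rw [sub_le_iff_le_add']
    refine aux_csSup_le_add hs hbg fun x hx => ?_
    have := (abs_sub_le_iff.mp (h x hx)).1; linarith
  · rw [sub_le_iff_le_add']
    refine aux_csSup_le_add hs hbf fun x hx => ?_
    have := (abs_sub_le_iff.mp (h x hx)).2; linarith

lemma aux_bdd {h : ℝ → ℝ} {T t : ℝ} (hc : ContinuousOn h (Icc 0 T)) (ht : t ≤ T) :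
    BddAbove (h '' Icc 0 t) :=
  (isCompact_Icc.image_of_continuousOn (hc.mono (Icc_subset_Icc le_rfl ht))).bddAbove

lemma aux_run_mono {h : ℝ → ℝ} {T u v : ℝ} (hc : ContinuousOn h (Icc 0 T))
    (hu : 0 ≤ u) (huv : u ≤ v) (hv : v ≤ T) :
    sSup (h '' Icc 0 u) ≤ sSup (h '' Icc 0 v) :=
  csSup_le_csSup (aux_bdd hc hv) ((nonempty_Icc.mpr hu).image h)
    (image_mono (Icc_subset_Icc_right huv))

lemma aux_run_continuous {h : ℝ → ℝ} {T : ℝ} (hT : 0 < T)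
    (hc : ContinuousOn h (Icc 0 T)) :
    ContinuousOn (fun t => sSup (h '' Icc 0 t)) (Icc 0 T) := by
  have hUC := isCompact_Icc.uniformContinuousOn_of_continuous hc
  rw [Metric.continuousOn_iff]
  intro t ht ε hε
  obtain ⟨δ, hδ0, hδ⟩ := (Metric.uniformContinuousOn_iff.mp hUC) (ε/2) (by linarith)
  refine ⟨δ, hδ0, fun s hs hst => ?_⟩
  -- key one-sided estimate
  have key : ∀ u v : ℝ, 0 ≤ u → u ≤ v → v ≤ T → v - u < δ →
      sSup (h '' Icc 0 v) ≤ sSup (h '' Icc 0 u) + ε/2 := by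
    intro u v hu huv hv hvu
    apply csSup_le ((nonempty_Icc.mpr (hu.trans huv)).image h)
    rintro _ ⟨x, hx, rfl⟩
    rcases le_or_gt x u with hxu | hxu
    · have : h x ≤ sSup (h '' Icc 0 u) :=
        le_csSup (aux_bdd hc (huv.trans hv)) (mem_image_of_mem h ⟨hx.1, hxu⟩)
      linarith
    · have hxI : x ∈ Icc (0:ℝ) T := ⟨hx.1, hx.2.trans hv⟩
      have huI : u ∈ Icc (0:ℝ) T := ⟨hu, huv.trans hv⟩
      have : dist x u < δ := by
        rw [Real.dist_eq, abs_of_nonneg (by linarith [hx.2])]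
        linarith [hx.2]
      have h1 : dist (h x) (h u) < ε/2 := hδ x hxI u huI this
      have h2 : h u ≤ sSup (h '' Icc 0 u) :=
        le_csSup (aux_bdd hc (huv.trans hv)) (mem_image_of_mem h ⟨hu, le_rfl⟩)
      have := (abs_sub_le_iff.mp (Real.dist_eq _ _ ▸ h1).le).1
      linarith
  rcases le_total s t with hst' | hst'
  · have h1 := aux_run_mono hc hs.1 hst' ht.2
    have h2 := key s t hs.1 hst' ht.2 (by rw [Real.dist_eq] at hst; have := abs_lt.mp hst; linarith)
    rw [Real.dist_eq, abs_of_nonpos (by linarith)]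
    linarith
  · have h1 := aux_run_mono hc ht.1 hst' hs.2
    have h2 := key t s ht.1 hst' hs.2 (by rw [Real.dist_eq] at hst; have := abs_lt.mp hst; linarith)
    rw [Real.dist_eq, abs_of_nonneg (by linarith)]
    linarith

lemma aux_step_integrable (μ : Measure ℝ) {T : ℝ} (hμ : μ (Ioc 0 T) ≠ ⊤)
    (N : ℕ) (p : ℕ → ℝ) (v : ℕ → ℝ) :
    Integrable (fun t => ∑ i ∈ Finset.range N,
      (Ioc (p i) (p (i+1))).indicator (fun _ => v i) t) (μ.restrict (Ioc 0 T)) := by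
  haveI : IsFiniteMeasure (μ.restrict (Ioc 0 T)) :=
    ⟨by rwa [Measure.restrict_apply_univ, lt_top_iff_ne_top]⟩
  apply integrable_finset_sum
  intro i _
  exact (integrable_const (v i)).indicator measurableSet_Ioc

lemma aux_step_integral (μ : Measure ℝ) {T : ℝ} (hμ : μ (Ioc 0 T) ≠ ⊤)
    (N : ℕ) (p : ℕ → ℝ) (v : ℕ → ℝ)
    (hsub : ∀ i, i < N → Ioc (p i) (p (i+1)) ⊆ Ioc 0 T) :
    ∫ t in Ioc 0 T, (∑ i ∈ Finset.range N,
        (Ioc (p i) (p (i+1))).indicator (fun _ => v i) t) ∂μ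
      = ∑ i ∈ Finset.range N, v i * (μ (Ioc (p i) (p (i+1)))).toReal := by
  haveI : IsFiniteMeasure (μ.restrict (Ioc 0 T)) :=
    ⟨by rwa [Measure.restrict_apply_univ, lt_top_iff_ne_top]⟩
  rw [integral_finset_sum _ (fun i _ => (integrable_const (v i)).indicator measurableSet_Ioc)]
  refine Finset.sum_congr rfl fun i hi => ?_
  rw [integral_indicator measurableSet_Ioc, setIntegral_const,
      measureReal_def, Measure.restrict_apply measurableSet_Ioc,
      inter_eq_self_of_subset_left (hsub i (Finset.mem_range.mp hi)),
      smul_eq_mul, mul_comm]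

lemma aux_key {T : ℝ} (hT : 0 < T)
    (Ln : ℕ → StieltjesFunction ℝ) (L : StieltjesFunction ℝ)
    (f : ℕ → ℝ → ℝ) (F : ℝ → ℝ)
    (hF : ContinuousOn F (Icc 0 T))
    (hfn : ∀ n, ContinuousOn (f n) (Icc 0 T))
    (hfconv : ∀ ε > 0, ∀ᶠ n in atTop, ∀ t ∈ Icc (0:ℝ) T, |f n t - F t| ≤ ε)
    (hLconv : ∀ ε > 0, ∀ᶠ n in atTop, ∀ t, |Ln n t - L t| ≤ ε)
    (hL0 : ∀ n, Ln n 0 = 0) (hL'0 : L 0 = 0) :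
    Tendsto (fun n => ∫ t in Ioc (0:ℝ) T, f n t ∂(Ln n).measure) atTop
      (𝓝 (∫ t in Ioc (0:ℝ) T, F t ∂L.measure)) := by
  set m : ℝ := L T with hm
  have hm0 : 0 ≤ m := by
    have h := L.mono hT.le; rw [hL'0] at h; exact h
  have hνIoc : L.measure (Ioc 0 T) = ENNReal.ofReal m := by
    rw [StieltjesFunction.measure_Ioc, hL'0, sub_zero]
  have hνfin : L.measure (Ioc 0 T) ≠ ⊤ := by rw [hνIoc]; exact ENNReal.ofReal_ne_top
  have hmν : (L.measure (Ioc 0 T)).toReal = m := by rw [hνIoc, ENNReal.toReal_ofReal hm0]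
  obtain ⟨M, hM⟩ := isCompact_Icc.exists_bound_of_continuousOn hF
  have hM0 : 0 ≤ M := le_trans (norm_nonneg _) (hM 0 ⟨le_rfl, hT.le⟩)
  rw [Metric.tendsto_nhds]
  intro ε hε
  set ε₁ : ℝ := ε/(8*(m+1)) with hε₁def
  have hε₁ : 0 < ε₁ := by positivity
  obtain ⟨δ, hδ0, hδ⟩ := Metric.uniformContinuousOn_iff.mp
    (isCompact_Icc.uniformContinuousOn_of_continuous hF) ε₁ hε₁
  obtain ⟨N, hN⟩ := exists_nat_gt (T/δ)
  have hN0 : (0:ℝ) < N := lt_trans (div_pos hT hδ0) hN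
  set q : ℝ := T / N with hqdef
  have hq0 : 0 < q := div_pos hT hN0
  have hqδ : q < δ := by
    rw [hqdef, div_lt_iff₀ hN0]
    calc T = (T/δ) * δ := by field_simp
    _ < N * δ := by exact mul_lt_mul_of_pos_right hN hδ0
    _ = δ * N := mul_comm _ _
  set p : ℕ → ℝ := fun i => i * q with hpdef
  have hpmono : Monotone p := fun i j hij => by
    simp only [hpdef]
    exact mul_le_mul_of_nonneg_right (Nat.cast_le.mpr hij) hq0.le
  have hpN : p N = T := by
    show (N:ℝ) * q = T
    rw [hqdef]; field_simp
  have hpmem : ∀ i, i ≤ N → p i ∈ Icc (0:ℝ) T := by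
    intro i hi
    refine ⟨by positivity, ?_⟩
    rw [← hpN]; exact hpmono hi
  have hsub : ∀ i, i < N → Ioc (p i) (p (i+1)) ⊆ Ioc 0 T := by
    intro i hi
    exact Ioc_subset_Ioc (hpmem i hi.le).1 (hpmem (i+1) hi).2
  set v : ℕ → ℝ := fun i => F (p (i+1)) with hvdef
  set g : ℝ → ℝ := fun t => ∑ i ∈ Finset.range N,
    (Ioc (p i) (p (i+1))).indicator (fun _ => v i) t with hgdef
  have hvM : ∀ i, i < N → |v i| ≤ M := by
    intro i hi
    simpa [Real.norm_eq_abs] using hM (p (i+1)) (hpmem (i+1) hi)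
  -- step approximation of F
  have hC1 : ∀ t ∈ Ioc (0:ℝ) T, |F t - g t| ≤ ε₁ := by
    intro t ht
    have hk1 : 1 ≤ ⌈t / q⌉₊ := Nat.one_le_ceil_iff.mpr (div_pos ht.1 hq0)
    set k := ⌈t / q⌉₊ with hkdef
    have hkN : k ≤ N := Nat.ceil_le.mpr (by
      rw [div_le_iff₀ hq0]
      exact ht.2.trans_eq hpN.symm)
    have htle : t ≤ p k := by
      have h1 := Nat.le_ceil (t/q)
      rw [div_le_iff₀ hq0] at h1
      exact h1
    set i := k - 1 with hidef
    have hik : i + 1 = k := Nat.succ_pred_eq_of_pos hk1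
    have hiN : i < N := lt_of_lt_of_le (Nat.sub_lt hk1 one_pos) hkN
    have htgt : p i < t := by
      have h2 : (i:ℕ) < ⌈t / q⌉₊ := by omega
      have h3 := Nat.lt_ceil.mp h2
      rw [lt_div_iff₀ hq0] at h3
      exact h3
    have hgt : g t = v i := by
      have hmem : t ∈ Ioc (p i) (p (i+1)) := ⟨htgt, by rw [hik]; exact htle⟩
      show (∑ j ∈ Finset.range N, (Ioc (p j) (p (j+1))).indicator (fun _ => v j) t) = v i
      refine (Finset.sum_eq_single_of_mem i (Finset.mem_range.mpr hiN) ?_).trans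
        (indicator_of_mem hmem _)
      intro j hj hji
      apply indicator_of_notMem
      rcases hji.lt_or_gt with h | h
      · intro hmem'
        have : p (j+1) ≤ p i := hpmono (by omega)
        exact absurd hmem'.2 (not_le.mpr (lt_of_le_of_lt this htgt))
      · intro hmem'
        have hle : p (i+1) ≤ p j := hpmono (by omega)
        have hle2 : t ≤ p j := by rw [hik] at hle; exact htle.trans hle
        exact absurd hmem'.1 (not_lt.mpr hle2)
    rw [hgt]
    have hd : dist t (p (i+1)) < δ := by
      rw [Real.dist_eq, abs_of_nonpos (by rw [hik]; linarith)]
      have hpi : p (i+1) = p i + q := by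
        simp only [hpdef]; push_cast; ring
      rw [hpi]
      linarith
    have := hδ t ⟨ht.1.le, ht.2⟩ (p (i+1)) (hpmem (i+1) hiN) hd
    rw [Real.dist_eq] at this
    exact this.le
  set ε₂ : ℝ := ε/(16*((N:ℝ)+1)*(M+1)) with hε₂def
  have hε₂ : 0 < ε₂ := by positivity
  have hi_Fν : IntegrableOn F (Ioc 0 T) L.measure :=
    (hF.integrableOn_compact isCompact_Icc).mono_set Ioc_subset_Icc_self
  have hi_gν := aux_step_integrable L.measure hνfin N p v
  filter_upwards [hfconv ε₁ hε₁, hLconv ε₂ hε₂, hLconv 1 one_pos] with n hf1 hL2 hL1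
  set μ := (Ln n).measure with hμdef
  have hmassn : μ (Ioc 0 T) = ENNReal.ofReal (Ln n T) := by
    rw [hμdef, StieltjesFunction.measure_Ioc, hL0, sub_zero]
  have hLnT0 : 0 ≤ Ln n T := by
    have h := (Ln n).mono hT.le; rw [hL0] at h; exact h
  have hmn : (μ (Ioc 0 T)).toReal = Ln n T := by rw [hmassn, ENNReal.toReal_ofReal hLnT0]
  have hmnle : Ln n T ≤ m + 1 := by
    have := abs_le.mp (hL1 T); linarith [this.1, this.2]
  have hμfin : μ (Ioc 0 T) ≠ ⊤ := by rw [hmassn]; exact ENNReal.ofReal_ne_top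
  have hμlt : μ (Ioc 0 T) < ⊤ := lt_top_iff_ne_top.mpr hμfin
  have hνlt : L.measure (Ioc 0 T) < ⊤ := lt_top_iff_ne_top.mpr hνfin
  have hi_fn : IntegrableOn (f n) (Ioc 0 T) μ :=
    ((hfn n).integrableOn_compact isCompact_Icc).mono_set Ioc_subset_Icc_self
  have hi_Fn : IntegrableOn F (Ioc 0 T) μ :=
    (hF.integrableOn_compact isCompact_Icc).mono_set Ioc_subset_Icc_self
  have hi_gn := aux_step_integrable μ hμfin N p v
  -- term 1
  have ht1 : |(∫ t in Ioc (0:ℝ) T, f n t ∂μ) - ∫ t in Ioc (0:ℝ) T, F t ∂μ| ≤ ε₁ * (m+1) := by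
    rw [← integral_sub hi_fn hi_Fn]
    calc |∫ t in Ioc (0:ℝ) T, (f n t - F t) ∂μ| ≤ ε₁ * (μ (Ioc 0 T)).toReal := by
          rw [← Real.norm_eq_abs]
          exact norm_setIntegral_le_of_norm_le_const hμlt
            (fun x hx => by rw [Real.norm_eq_abs]; exact hf1 x ⟨hx.1.le, hx.2⟩)
    _ ≤ ε₁ * (m+1) := by rw [hmn]; exact mul_le_mul_of_nonneg_left hmnle hε₁.le
  -- term 2
  have ht2 : |(∫ t in Ioc (0:ℝ) T, F t ∂μ) - ∫ t in Ioc (0:ℝ) T, g t ∂μ| ≤ ε₁ * (m+1) := by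
    rw [← integral_sub hi_Fn hi_gn]
    calc |∫ t in Ioc (0:ℝ) T, (F t - g t) ∂μ| ≤ ε₁ * (μ (Ioc 0 T)).toReal := by
          rw [← Real.norm_eq_abs]
          exact norm_setIntegral_le_of_norm_le_const hμlt
            (fun x hx => by rw [Real.norm_eq_abs]; exact hC1 x hx)
    _ ≤ ε₁ * (m+1) := by rw [hmn]; exact mul_le_mul_of_nonneg_left hmnle hε₁.le
  -- term 4
  have ht4 : |(∫ t in Ioc (0:ℝ) T, g t ∂L.measure) - ∫ t in Ioc (0:ℝ) T, F t ∂L.measure|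
      ≤ ε₁ * (m+1) := by
    rw [← integral_sub hi_gν hi_Fν]
    calc |∫ t in Ioc (0:ℝ) T, (g t - F t) ∂L.measure| ≤ ε₁ * (L.measure (Ioc 0 T)).toReal := by
          rw [← Real.norm_eq_abs]
          exact norm_setIntegral_le_of_norm_le_const hνlt
            (fun x hx => by rw [Real.norm_eq_abs, abs_sub_comm]; exact hC1 x hx)
    _ ≤ ε₁ * (m+1) := by rw [hmν]; exact mul_le_mul_of_nonneg_left (by linarith) hε₁.le
  -- term 3
  have ht3 : |(∫ t in Ioc (0:ℝ) T, g t ∂μ) - ∫ t in Ioc (0:ℝ) T, g t ∂L.measure|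
      ≤ (N:ℝ) * (M * (2 * ε₂)) := by
    rw [hgdef, aux_step_integral μ hμfin N p v hsub, aux_step_integral L.measure hνfin N p v hsub,
      ← Finset.sum_sub_distrib]
    have hterm : ∀ i ∈ Finset.range N,
        |v i * (μ (Ioc (p i) (p (i+1)))).toReal - v i * (L.measure (Ioc (p i) (p (i+1)))).toReal|
          ≤ M * (2 * ε₂) := by
      intro i hi
      have hiN := Finset.mem_range.mp hi
      have hab : p i ≤ p (i+1) := hpmono (Nat.le_succ i)
      have h1 : (μ (Ioc (p i) (p (i+1)))).toReal = Ln n (p (i+1)) - Ln n (p i) := by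
        rw [hμdef, StieltjesFunction.measure_Ioc,
          ENNReal.toReal_ofReal (sub_nonneg.mpr ((Ln n).mono hab))]
      have h2 : (L.measure (Ioc (p i) (p (i+1)))).toReal = L (p (i+1)) - L (p i) := by
        rw [StieltjesFunction.measure_Ioc, ENNReal.toReal_ofReal (sub_nonneg.mpr (L.mono hab))]
      rw [h1, h2, ← mul_sub, abs_mul]
      have hd : |Ln n (p (i+1)) - Ln n (p i) - (L (p (i+1)) - L (p i))| ≤ 2 * ε₂ := by
        have ha := abs_le.mp (hL2 (p (i+1)))
        have hb := abs_le.mp (hL2 (p i))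
        rw [abs_le]
        exact ⟨by linarith [ha.1, hb.2], by linarith [ha.2, hb.1]⟩
      exact mul_le_mul (hvM i hiN) hd (abs_nonneg _) hM0
    refine (Finset.abs_sum_le_sum_abs _ _).trans ?_
    refine (Finset.sum_le_sum hterm).trans ?_
    rw [Finset.sum_const, Finset.card_range, nsmul_eq_mul]
  -- combine
  rw [Real.dist_eq]
  have htotal : |(∫ t in Ioc (0:ℝ) T, f n t ∂μ) - ∫ t in Ioc (0:ℝ) T, F t ∂L.measure|
      ≤ 3 * (ε₁ * (m+1)) + (N:ℝ) * (M * (2 * ε₂)) := by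
    have hsplit : (∫ t in Ioc (0:ℝ) T, f n t ∂μ) - ∫ t in Ioc (0:ℝ) T, F t ∂L.measure
        = ((∫ t in Ioc (0:ℝ) T, f n t ∂μ) - ∫ t in Ioc (0:ℝ) T, F t ∂μ)
          + (((∫ t in Ioc (0:ℝ) T, F t ∂μ) - ∫ t in Ioc (0:ℝ) T, g t ∂μ)
          + (((∫ t in Ioc (0:ℝ) T, g t ∂μ) - ∫ t in Ioc (0:ℝ) T, g t ∂L.measure)
          + ((∫ t in Ioc (0:ℝ) T, g t ∂L.measure) - ∫ t in Ioc (0:ℝ) T, F t ∂L.measure))) := by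
      ring
    rw [hsplit]
    have := abs_add_le ((∫ t in Ioc (0:ℝ) T, f n t ∂μ) - ∫ t in Ioc (0:ℝ) T, F t ∂μ)
      (((∫ t in Ioc (0:ℝ) T, F t ∂μ) - ∫ t in Ioc (0:ℝ) T, g t ∂μ)
        + (((∫ t in Ioc (0:ℝ) T, g t ∂μ) - ∫ t in Ioc (0:ℝ) T, g t ∂L.measure)
        + ((∫ t in Ioc (0:ℝ) T, g t ∂L.measure) - ∫ t in Ioc (0:ℝ) T, F t ∂L.measure)))
    have h2 := abs_add_le ((∫ t in Ioc (0:ℝ) T, F t ∂μ) - ∫ t in Ioc (0:ℝ) T, g t ∂μ)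
      (((∫ t in Ioc (0:ℝ) T, g t ∂μ) - ∫ t in Ioc (0:ℝ) T, g t ∂L.measure)
        + ((∫ t in Ioc (0:ℝ) T, g t ∂L.measure) - ∫ t in Ioc (0:ℝ) T, F t ∂L.measure))
    have h3 := abs_add_le ((∫ t in Ioc (0:ℝ) T, g t ∂μ) - ∫ t in Ioc (0:ℝ) T, g t ∂L.measure)
      ((∫ t in Ioc (0:ℝ) T, g t ∂L.measure) - ∫ t in Ioc (0:ℝ) T, F t ∂L.measure)
    linarith
  have harith1 : ε₁ * (m+1) = ε/8 := by
    rw [hε₁def]; field_simp; try ring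
  have harith2 : (N:ℝ) * (M * (2 * ε₂)) ≤ ε/8 := by
    rw [hε₂def]
    have hkey : (N:ℝ) * M ≤ ((N:ℝ)+1) * (M+1) := by nlinarith
    have hD : (0:ℝ) < ((N:ℝ)+1)*(M+1) := by positivity
    have heq : (N:ℝ) * (M * (2 * (ε/(16*((N:ℝ)+1)*(M+1)))))
        = ((N:ℝ)*M) / (((N:ℝ)+1)*(M+1)) * (ε/8) := by
      field_simp
      ring
    rw [heq]
    have hle1 : ((N:ℝ)*M) / (((N:ℝ)+1)*(M+1)) ≤ 1 := (div_le_one hD).mpr hkey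
    calc ((N:ℝ)*M) / (((N:ℝ)+1)*(M+1)) * (ε/8) ≤ 1 * (ε/8) :=
          mul_le_mul_of_nonneg_right hle1 (by positivity)
      _ = ε/8 := one_mul _
  calc |(∫ t in Ioc (0:ℝ) T, f n t ∂μ) - ∫ t in Ioc (0:ℝ) T, F t ∂L.measure|
      ≤ 3 * (ε₁ * (m+1)) + (N:ℝ) * (M * (2 * ε₂)) := htotal
    _ ≤ 3 * (ε/8) + ε/8 := by rw [harith1]; linarith
    _ < ε := by linarith

/-- Continuity (in sequential form, for the product sup-norm topology)
of the reflection-cost functional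
`(a, y) ↦ ∫_{[0,T]} c(t, Γ(a,y)(t)) d(Γ(a,y) - y)(t)`
on `{(a, y) : y 0 ≥ a 0}`, where `Γ(a,y)(t) = y t + sup_{s ∈ [0,t]} max (a s - y s) 0` is
the dynamic Skorokhod map and the integral is with respect to the Lebesgue–Stieltjes
measure of the regulator `r = Γ(a,y) - y` (encoded by any Stieltjes function agreeing
with the clamped extension of `r`). -/
theorem stmt11 (T : ℝ) (hT : 0 < T) (c : ℝ → ℝ → ℝ)
    (hc : ContinuousOn (Function.uncurry c) (Set.Icc (0:ℝ) T ×ˢ (Set.univ : Set ℝ)))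
    (a y : ℕ → ℝ → ℝ) (A Y : ℝ → ℝ)
    (ha : ∀ n, ContinuousOn (a n) (Set.Icc 0 T))
    (hy : ∀ n, ContinuousOn (y n) (Set.Icc 0 T))
    (hA : ContinuousOn A (Set.Icc 0 T)) (hY : ContinuousOn Y (Set.Icc 0 T))
    (h0n : ∀ n, a n 0 ≤ y n 0) (h0 : A 0 ≤ Y 0)
    (hconva : TendstoUniformlyOn (fun n => a n) A atTop (Set.Icc 0 T))
    (hconvy : TendstoUniformlyOn (fun n => y n) Y atTop (Set.Icc 0 T))
    (L : ℕ → StieltjesFunction ℝ) (L' : StieltjesFunction ℝ)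
    (hLn : ∀ n t, L n t = sSup ((fun s => max (a n s - y n s) 0) '' Set.Icc 0 (min t T)))
    (hL : ∀ t, L' t = sSup ((fun s => max (A s - Y s) 0) '' Set.Icc 0 (min t T))) :
    Tendsto
      (fun n => ∫ t in Set.Icc (0:ℝ) T,
        c t (y n t + sSup ((fun s => max (a n s - y n s) 0) '' Set.Icc 0 t))
          ∂(L n).measure)
      atTop
      (𝓝 (∫ t in Set.Icc (0:ℝ) T,
        c t (Y t + sSup ((fun s => max (A s - Y s) 0) '' Set.Icc 0 t))
          ∂L'.measure)) := by
  -- basic continuity facts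
  set hn : ℕ → ℝ → ℝ := fun n s => max (a n s - y n s) 0 with hhndef
  set H : ℝ → ℝ := fun s => max (A s - Y s) 0 with hHdef
  have hhn : ∀ n, ContinuousOn (hn n) (Icc 0 T) := fun n =>
    ContinuousOn.sup ((ha n).sub (hy n)) continuousOn_const
  have hH : ContinuousOn H (Icc 0 T) :=
    ContinuousOn.sup (hA.sub hY) continuousOn_const
  set f : ℕ → ℝ → ℝ := fun n t => c t (y n t + sSup (hn n '' Icc 0 t)) with hfdef
  set F : ℝ → ℝ := fun t => c t (Y t + sSup (H '' Icc 0 t)) with hFdef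
  set u : ℕ → ℝ → ℝ := fun n t => y n t + sSup (hn n '' Icc 0 t) with hudef
  set U : ℝ → ℝ := fun t => Y t + sSup (H '' Icc 0 t) with hUdef
  have hun : ∀ n, ContinuousOn (u n) (Icc 0 T) :=
    fun n => (hy n).add (aux_run_continuous hT (hhn n))
  have hU : ContinuousOn U (Icc 0 T) := hY.add (aux_run_continuous hT hH)
  have hfn : ∀ n, ContinuousOn (f n) (Icc 0 T) := by
    intro n
    exact hc.comp (continuousOn_id.prodMk (hun n)) (fun t ht => ⟨ht, mem_univ _⟩)
  have hF : ContinuousOn F (Icc 0 T) :=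
    hc.comp (continuousOn_id.prodMk hU) (fun t ht => ⟨ht, mem_univ _⟩)
  -- uniform closeness of the h's
  have hhconv : ∀ ε > 0, ∀ᶠ n in atTop, ∀ s ∈ Icc (0:ℝ) T, |hn n s - H s| ≤ ε := by
    intro ε hε
    filter_upwards [Metric.tendstoUniformlyOn_iff.mp hconva (ε/2) (by linarith),
      Metric.tendstoUniformlyOn_iff.mp hconvy (ε/2) (by linarith)] with n hca hcy
    intro s hs
    have h1 := hca s hs
    have h2 := hcy s hs
    rw [Real.dist_eq] at h1 h2
    have h3 := abs_max_sub_max_le_abs (a n s - y n s) (A s - Y s) 0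
    have h4 : |a n s - y n s - (A s - Y s)| ≤ |a n s - A s| + |y n s - Y s| := by
      have := abs_sub (a n s - A s) (y n s - Y s)
      calc |a n s - y n s - (A s - Y s)| = |(a n s - A s) - (y n s - Y s)| := by ring_nf
        _ ≤ |a n s - A s| + |y n s - Y s| := abs_sub _ _
    rw [abs_sub_comm] at h1
    rw [abs_sub_comm] at h2
    calc |hn n s - H s| ≤ |a n s - y n s - (A s - Y s)| := h3
      _ ≤ |a n s - A s| + |y n s - Y s| := h4
      _ ≤ ε := by linarith
  -- uniform closeness of running sups on [0,T]
  have hSconv : ∀ ε > 0, ∀ᶠ n in atTop, ∀ t ∈ Icc (0:ℝ) T,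
      |sSup (hn n '' Icc 0 t) - sSup (H '' Icc 0 t)| ≤ ε := by
    intro ε hε
    filter_upwards [hhconv ε hε] with n hcl
    intro t ht
    exact aux_sSup_dist (nonempty_Icc.mpr ht.1)
      (aux_bdd (hhn n) ht.2) (aux_bdd hH ht.2)
      (fun s hs => hcl s ⟨hs.1, hs.2.trans ht.2⟩)
  -- values of the Stieltjes functions
  have hLn0 : ∀ n, L n 0 = 0 := by
    intro n
    rw [hLn n 0, min_eq_left hT.le, Icc_self, image_singleton, csSup_singleton]
    exact max_eq_right (sub_nonpos.mpr (h0n n))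
  have hL'0 : L' 0 = 0 := by
    rw [hL 0, min_eq_left hT.le, Icc_self, image_singleton, csSup_singleton]
    exact max_eq_right (sub_nonpos.mpr h0)
  have hLnneg : ∀ n, ∀ t < (0:ℝ), L n t = 0 := by
    intro n t ht
    rw [hLn n t, min_eq_left (ht.le.trans hT.le), Icc_eq_empty (not_le.mpr ht),
      image_empty, Real.sSup_empty]
  have hL'neg : ∀ t < (0:ℝ), L' t = 0 := by
    intro t ht
    rw [hL t, min_eq_left (ht.le.trans hT.le), Icc_eq_empty (not_le.mpr ht),
      image_empty, Real.sSup_empty]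
  -- uniform closeness of the Stieltjes functions on all of ℝ
  have hLconv : ∀ ε > 0, ∀ᶠ n in atTop, ∀ t, |L n t - L' t| ≤ ε := by
    intro ε hε
    filter_upwards [hSconv ε hε] with n hcl
    intro t
    rcases lt_or_ge t 0 with ht | ht
    · rw [hLnneg n t ht, hL'neg t ht]; simpa using hε.le
    · have ht' : min t T ∈ Icc (0:ℝ) T := ⟨le_min ht hT.le, min_le_right _ _⟩
      rw [hLn n t, hL t]
      exact hcl (min t T) ht'
  -- zero mass at 0
  have hleft : ∀ (S : StieltjesFunction ℝ), (∀ t < (0:ℝ), S t = 0) → Function.leftLim S 0 = 0 := by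
    intro S hS
    apply leftLim_eq_of_tendsto
    apply Tendsto.congr' ?_ tendsto_const_nhds
    filter_upwards [self_mem_nhdsWithin] with t ht
    exact (hS t ht).symm
  have hzero : ∀ (S : StieltjesFunction ℝ), S 0 = 0 → (∀ t < (0:ℝ), S t = 0) →
      S.measure {0} = 0 := by
    intro S h1 h2
    rw [StieltjesFunction.measure_singleton, h1, hleft S h2, sub_zero, ENNReal.ofReal_zero]
  -- convert Icc-integrals to Ioc-integrals
  have haeeq : ∀ (μ : Measure ℝ), μ {0} = 0 → (Icc (0:ℝ) T : Set ℝ) =ᵐ[μ] Ioc (0:ℝ) T := by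
    intro μ hμ
    rw [MeasureTheory.ae_eq_set]
    constructor
    · apply measure_mono_null _ hμ
      intro x hx
      by_contra hx0
      exact hx.2 ⟨lt_of_le_of_ne hx.1.1 (Ne.symm hx0), hx.1.2⟩
    · apply measure_mono_null _ hμ
      intro x hx
      exact absurd (Ioc_subset_Icc_self hx.1) hx.2
  have hrw1 : ∀ n, (∫ t in Icc (0:ℝ) T, f n t ∂(L n).measure)
      = ∫ t in Ioc (0:ℝ) T, f n t ∂(L n).measure :=
    fun n => setIntegral_congr_set (haeeq _ (hzero (L n) (hLn0 n) (hLnneg n)))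
  have hrw2 : (∫ t in Icc (0:ℝ) T, F t ∂L'.measure)
      = ∫ t in Ioc (0:ℝ) T, F t ∂L'.measure :=
    setIntegral_congr_set (haeeq _ (hzero L' hL'0 hL'neg))
  -- uniform convergence of integrands
  have hfconv : ∀ ε > 0, ∀ᶠ n in atTop, ∀ t ∈ Icc (0:ℝ) T, |f n t - F t| ≤ ε := by
    intro ε hε
    obtain ⟨R, hR⟩ := isCompact_Icc.exists_bound_of_continuousOn hU
    have hR0 : 0 ≤ R := le_trans (norm_nonneg _) (hR 0 ⟨le_rfl, hT.le⟩)
    have hK : IsCompact (Icc (0:ℝ) T ×ˢ Icc (-(R+1)) (R+1)) :=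
      isCompact_Icc.prod isCompact_Icc
    have hc' : ContinuousOn (Function.uncurry c) (Icc (0:ℝ) T ×ˢ Icc (-(R+1)) (R+1)) :=
      hc.mono (prod_mono subset_rfl (subset_univ _))
    obtain ⟨δ, hδ0, hδ⟩ := Metric.uniformContinuousOn_iff.mp
      (hK.uniformContinuousOn_of_continuous hc') ε hε
    set η : ℝ := min δ 1 with hηdef
    have hη0 : 0 < η := lt_min hδ0 one_pos
    filter_upwards [hSconv (η/4) (by linarith),
      Metric.tendstoUniformlyOn_iff.mp hconvy (η/4) (by linarith)] with n hS hY4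
    intro t ht
    have h1 : |y n t - Y t| ≤ η/4 := by
      have := hY4 t ht; rw [Real.dist_eq, abs_sub_comm] at this; exact this.le
    have h2 := hS t ht
    have hdu : |u n t - U t| ≤ η/2 := by
      calc |u n t - U t| = |(y n t - Y t) + (sSup (hn n '' Icc 0 t) - sSup (H '' Icc 0 t))| := by
            rw [hudef, hUdef]; ring_nf
        _ ≤ |y n t - Y t| + |sSup (hn n '' Icc 0 t) - sSup (H '' Icc 0 t)| := abs_add_le _ _
        _ ≤ η/2 := by linarith
    have hUt : U t ∈ Icc (-(R+1)) (R+1) := by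
      have := hR t ht; rw [Real.norm_eq_abs, abs_le] at this
      exact ⟨by linarith [this.1], by linarith [this.2]⟩
    have hut : u n t ∈ Icc (-(R+1)) (R+1) := by
      have h3 := hR t ht; rw [Real.norm_eq_abs, abs_le] at h3
      have hη1 : η ≤ 1 := min_le_right _ _
      have h4' : |u n t - U t| ≤ 1 := hdu.trans (by linarith)
      have h4 := abs_le.mp h4'
      exact ⟨by linarith [h3.1, h4.1], by linarith [h3.2, h4.2]⟩
    have hdist : dist ((t, u n t) : ℝ × ℝ) (t, U t) < δ := by
      rw [Prod.dist_eq]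
      simp only [dist_self]
      rw [Real.dist_eq]
      have : |u n t - U t| < η := lt_of_le_of_lt hdu (by linarith)
      have hηδ : η ≤ δ := min_le_left _ _
      calc max 0 |u n t - U t| ≤ |u n t - U t| := by
            rw [max_le_iff]; exact ⟨abs_nonneg _, le_rfl⟩
        _ < δ := lt_of_lt_of_le this hηδ
    have := hδ (t, u n t) ⟨ht, hut⟩ (t, U t) ⟨ht, hUt⟩ hdist
    rw [Real.dist_eq] at this
    exact this.le
  -- finish
  have hgoal := aux_key hT L L' f F hF hfn hfconv hLconv hLn0 hL'0
  have e1 : (fun n => ∫ t in Icc (0:ℝ) T, f n t ∂(L n).measure)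
      = fun n => ∫ t in Ioc (0:ℝ) T, f n t ∂(L n).measure := funext hrw1
  rw [show (fun n => ∫ t in Set.Icc (0:ℝ) T,
        c t (y n t + sSup ((fun s => max (a n s - y n s) 0) '' Set.Icc 0 t))
          ∂(L n).measure)
      = fun n => ∫ t in Icc (0:ℝ) T, f n t ∂(L n).measure from rfl,
    show (∫ t in Set.Icc (0:ℝ) T,
        c t (Y t + sSup ((fun s => max (A s - Y s) 0) '' Set.Icc 0 t)) ∂L'.measure)
      = ∫ t in Icc (0:ℝ) T, F t ∂L'.measure from rfl, e1, hrw2]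
  exact hgoal
end
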